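/- arXiv:2407.14547 — 5 statements merged into one kernel-verified Lean document; each statement's English description precedes it below -/
import Mathlib

section
/- The function x ↦ (E(x) - (1-x)·K(x))/x is strictly increasing on (0,1), with limit π/4 as x → 0⁺ and limit 1 as x → 1⁻. -/
open Real Set Filter

noncomputable def K (x : ℝ) : ℝ :=
  ∫ t in (0 : ℝ)..(π / 2), (1 - x * Real.sin t ^ 2) ^ (-(1/2) : ℝ)

noncomputable def E (x : ℝ) : ℝ :=
  ∫ t in (0 : ℝ)..(π / 2), (1 - x * Real.sin t ^ 2) ^ ((1/2) : ℝ)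

namespace Stmt0Aux

lemma base_pos {x : ℝ} (hx0 : 0 ≤ x) (hx1 : x < 1) (t : ℝ) :
    0 < 1 - x * Real.sin t ^ 2 := by
  nlinarith [Real.sin_sq_le_one t, sq_nonneg (Real.sin t)]

/-- The reduced integrand function. -/
noncomputable def g (x : ℝ) : ℝ :=
  ∫ t in (0 : ℝ)..(π / 2), Real.cos t ^ 2 / Real.sqrt (1 - x * Real.sin t ^ 2)

lemma g_cont {x : ℝ} (hx0 : 0 ≤ x) (hx1 : x < 1) :
    Continuous fun t : ℝ => Real.cos t ^ 2 / Real.sqrt (1 - x * Real.sin t ^ 2) := by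
  apply (Real.continuous_cos.pow 2).div
  · exact Real.continuous_sqrt.comp (by continuity)
  · intro t
    exact (Real.sqrt_pos.2 (base_pos hx0 hx1 t)).ne'

lemma g_integrable {x : ℝ} (hx0 : 0 ≤ x) (hx1 : x < 1) :
    IntervalIntegrable (fun t : ℝ => Real.cos t ^ 2 / Real.sqrt (1 - x * Real.sin t ^ 2))
      MeasureTheory.volume 0 (π / 2) :=
  (g_cont hx0 hx1).intervalIntegrable _ _

lemma key {x : ℝ} (hx0 : 0 < x) (hx1 : x < 1) :
    (E x - (1 - x) * K x) / x = g x := by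
  have hb : ∀ t : ℝ, 0 < 1 - x * Real.sin t ^ 2 := base_pos hx0.le hx1
  have hcont : Continuous fun t : ℝ => 1 - x * Real.sin t ^ 2 := by continuity
  have h1 : Continuous fun t : ℝ => (1 - x * Real.sin t ^ 2) ^ ((1/2) : ℝ) := by
    apply hcont.rpow_const
    intro t; right; norm_num
  have h2 : Continuous fun t : ℝ => (1 - x * Real.sin t ^ 2) ^ (-(1/2) : ℝ) := by
    apply hcont.rpow_const
    intro t; left; exact (hb t).ne'
  have hEK : E x - (1 - x) * K x
      = ∫ t in (0:ℝ)..(π/2), ((1 - x * Real.sin t ^ 2) ^ ((1/2):ℝ)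
          - (1 - x) * (1 - x * Real.sin t ^ 2) ^ (-(1/2):ℝ)) := by
    rw [E, K, ← intervalIntegral.integral_const_mul,
      ← intervalIntegral.integral_sub (h1.intervalIntegrable _ _)
        ((h2.intervalIntegrable _ _).const_mul (1 - x))]
  have hpt : ∀ t : ℝ, (1 - x * Real.sin t ^ 2) ^ ((1/2):ℝ)
      - (1 - x) * (1 - x * Real.sin t ^ 2) ^ (-(1/2):ℝ)
      = x * (Real.cos t ^ 2 / Real.sqrt (1 - x * Real.sin t ^ 2)) := by
    intro t
    have hbt := hb t
    have hs : 0 < Real.sqrt (1 - x * Real.sin t ^ 2) := Real.sqrt_pos.2 hbt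
    have hmul : Real.sqrt (1 - x * Real.sin t ^ 2) * Real.sqrt (1 - x * Real.sin t ^ 2)
        = 1 - x * Real.sin t ^ 2 := Real.mul_self_sqrt hbt.le
    have hcs := Real.sin_sq_add_cos_sq t
    rw [Real.rpow_neg hbt.le, ← Real.sqrt_eq_rpow]
    field_simp
    nlinarith [hmul, hcs]
  rw [hEK]
  simp_rw [hpt]
  rw [intervalIntegral.integral_const_mul, g, mul_div_cancel_left₀ _ hx0.ne']

lemma g_strictMono : StrictMonoOn g (Ioo (0:ℝ) 1) := by
  intro x hx y hy hxy
  have hcx := g_cont hx.1.le hx.2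
  have hcy := g_cont hy.1.le hy.2
  have hpi : (0:ℝ) < π / 2 := by positivity
  apply intervalIntegral.integral_lt_integral_of_continuousOn_of_le_of_exists_lt hpi
    hcx.continuousOn hcy.continuousOn
  · intro t _
    have h1 : 0 < 1 - y * Real.sin t ^ 2 := base_pos hy.1.le hy.2 t
    have h2 : 1 - y * Real.sin t ^ 2 ≤ 1 - x * Real.sin t ^ 2 := by
      nlinarith [sq_nonneg (Real.sin t)]
    exact div_le_div_of_nonneg_left (sq_nonneg _) (Real.sqrt_pos.2 h1)
      (Real.sqrt_le_sqrt h2)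
  · refine ⟨π/4, ⟨by positivity, by linarith [pi_pos]⟩, ?_⟩
    have hc : Real.cos (π/4) ^ 2 = 1/2 := by
      rw [Real.cos_pi_div_four]
      rw [div_pow, Real.sq_sqrt (by norm_num : (0:ℝ) ≤ 2)]
      norm_num
    have hsin : Real.sin (π/4) ^ 2 = 1/2 := by
      rw [Real.sin_pi_div_four]
      rw [div_pow, Real.sq_sqrt (by norm_num : (0:ℝ) ≤ 2)]
      norm_num
    rw [hc, hsin]
    have h1 : 0 < 1 - y * (1/2) := by nlinarith [hy.2]
    have h2 : 1 - y * (1/2) < 1 - x * (1/2) := by nlinarith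
    exact div_lt_div_of_pos_left (by norm_num) (Real.sqrt_pos.2 h1)
      (Real.sqrt_lt_sqrt h1.le h2)

lemma integral_cos_sq' : (∫ t in (0:ℝ)..(π/2), Real.cos t ^ 2) = π / 4 := by
  rw [integral_cos_sq]
  simp
  ring

lemma g_ge_pi_div_four {x : ℝ} (hx : x ∈ Ioo (0:ℝ) 1) : π / 4 ≤ g x := by
  rw [← integral_cos_sq']
  apply intervalIntegral.integral_mono_on (by positivity)
    ((Real.continuous_cos.pow 2).intervalIntegrable _ _) (g_integrable hx.1.le hx.2)
  intro t _
  have hb := base_pos hx.1.le hx.2 t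
  have hs : 0 < Real.sqrt (1 - x * Real.sin t ^ 2) := Real.sqrt_pos.2 hb
  show Real.cos t ^ 2 ≤ Real.cos t ^ 2 / Real.sqrt (1 - x * Real.sin t ^ 2)
  rw [le_div_iff₀ hs]
  have hle1 : Real.sqrt (1 - x * Real.sin t ^ 2) ≤ 1 := by
    rw [Real.sqrt_le_one]
    nlinarith [sq_nonneg (Real.sin t), hx.1]
  nlinarith [sq_nonneg (Real.cos t)]

lemma g_le_aux {x : ℝ} (hx : x ∈ Ioo (0:ℝ) 1) :
    g x ≤ (Real.sqrt (1 - x))⁻¹ * (π / 4) := by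
  have h1x : (0:ℝ) < 1 - x := by linarith [hx.2]
  have hs1x : 0 < Real.sqrt (1 - x) := Real.sqrt_pos.2 h1x
  have : g x ≤ ∫ t in (0:ℝ)..(π/2), (Real.sqrt (1 - x))⁻¹ * Real.cos t ^ 2 := by
    apply intervalIntegral.integral_mono_on (by positivity) (g_integrable hx.1.le hx.2)
      ((continuous_const.mul (Real.continuous_cos.pow 2)).intervalIntegrable _ _)
    intro t _
    have hb := base_pos hx.1.le hx.2 t
    have hle : 1 - x ≤ 1 - x * Real.sin t ^ 2 := by
      nlinarith [Real.sin_sq_le_one t, hx.1]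
    calc Real.cos t ^ 2 / Real.sqrt (1 - x * Real.sin t ^ 2)
        ≤ Real.cos t ^ 2 / Real.sqrt (1 - x) :=
          div_le_div_of_nonneg_left (sq_nonneg _) hs1x (Real.sqrt_le_sqrt hle)
      _ = (Real.sqrt (1 - x))⁻¹ * Real.cos t ^ 2 := by rw [div_eq_inv_mul]
  rwa [intervalIntegral.integral_const_mul, integral_cos_sq'] at this

lemma g_le_one {x : ℝ} (hx : x ∈ Ioo (0:ℝ) 1) : g x ≤ 1 := by
  have : g x ≤ ∫ t in (0:ℝ)..(π/2), Real.cos t := by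
    apply intervalIntegral.integral_mono_on (by positivity) (g_integrable hx.1.le hx.2)
      (Real.continuous_cos.intervalIntegrable _ _)
    intro t ht
    have hb := base_pos hx.1.le hx.2 t
    have hs : 0 < Real.sqrt (1 - x * Real.sin t ^ 2) := Real.sqrt_pos.2 hb
    have hcos : 0 ≤ Real.cos t := Real.cos_nonneg_of_mem_Icc
      ⟨by linarith [ht.1, pi_pos], ht.2⟩
    have hge : Real.cos t ≤ Real.sqrt (1 - x * Real.sin t ^ 2) := by
      rw [show Real.cos t = Real.sqrt (Real.cos t ^ 2) from
        (Real.sqrt_sq hcos).symm]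
      apply Real.sqrt_le_sqrt
      nlinarith [Real.sin_sq_add_cos_sq t, sq_nonneg (Real.sin t), hx.2]
    rw [div_le_iff₀ hs]
    nlinarith
  rwa [integral_cos, Real.sin_pi_div_two, Real.sin_zero, sub_zero] at this

lemma g_ge_aux {x : ℝ} (hx : x ∈ Ioo (0:ℝ) 1) :
    1 - π / 2 * Real.sqrt (1 - x) ≤ g x := by
  have h1x : (0:ℝ) < 1 - x := by linarith [hx.2]
  set δ := Real.sqrt (1 - x) with hδdef
  have hδ : 0 < δ := Real.sqrt_pos.2 h1x
  have hδsq : δ ^ 2 = 1 - x := Real.sq_sqrt h1x.le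
  have hint : (∫ t in (0:ℝ)..(π/2), (Real.cos t - δ)) = 1 - π / 2 * δ := by
    rw [intervalIntegral.integral_sub (Real.continuous_cos.intervalIntegrable _ _)
      (intervalIntegrable_const), integral_cos, intervalIntegral.integral_const]
    simp only [Real.sin_pi_div_two, Real.sin_zero, sub_zero, smul_eq_mul]
  rw [← hint]
  apply intervalIntegral.integral_mono_on (by positivity)
    ((Real.continuous_cos.sub continuous_const).intervalIntegrable _ _)
    (g_integrable hx.1.le hx.2)
  intro t ht
  have hb := base_pos hx.1.le hx.2 t
  have hs : 0 < Real.sqrt (1 - x * Real.sin t ^ 2) := Real.sqrt_pos.2 hb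
  have hcos : 0 ≤ Real.cos t := Real.cos_nonneg_of_mem_Icc
    ⟨by linarith [ht.1, pi_pos], ht.2⟩
  have hub : Real.sqrt (1 - x * Real.sin t ^ 2) ≤ Real.cos t + δ := by
    rw [show Real.cos t + δ = Real.sqrt ((Real.cos t + δ) ^ 2) from
      (Real.sqrt_sq (by positivity)).symm]
    apply Real.sqrt_le_sqrt
    nlinarith [Real.sin_sq_add_cos_sq t, Real.sin_sq_le_one t, hx.2,
      mul_nonneg hcos hδ.le, sq_nonneg (Real.sin t)]
  show Real.cos t - δ ≤ Real.cos t ^ 2 / Real.sqrt (1 - x * Real.sin t ^ 2)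
  rw [le_div_iff₀ hs]
  rcases le_or_gt δ (Real.cos t) with hcase | hcase
  · nlinarith [mul_nonneg (sub_nonneg.2 hcase)
      (sub_nonneg.2 hub)]
  · nlinarith [mul_nonneg (sub_pos.2 hcase).le (Real.sqrt_nonneg (1 - x * Real.sin t ^ 2)),
      sq_nonneg (Real.cos t)]

lemma g_tendsto_zero : Tendsto g (nhdsWithin 0 (Ioo (0:ℝ) 1)) (nhds (π/4)) := by
  have hupper : Tendsto (fun x : ℝ => (Real.sqrt (1 - x))⁻¹ * (π/4))
      (nhdsWithin 0 (Ioo (0:ℝ) 1)) (nhds (π/4)) := by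
    have hca : ContinuousAt (fun x : ℝ => (Real.sqrt (1 - x))⁻¹ * (π/4)) 0 := by
      have h1 : ContinuousAt (fun x : ℝ => Real.sqrt (1 - x)) 0 :=
        (Real.continuous_sqrt.comp (continuous_const.sub continuous_id)).continuousAt
      apply ContinuousAt.mul _ continuousAt_const
      apply h1.inv₀
      simp
    have h2 : Tendsto (fun x : ℝ => (Real.sqrt (1 - x))⁻¹ * (π/4))
        (nhdsWithin 0 (Ioo (0:ℝ) 1)) (nhds ((Real.sqrt (1 - (0:ℝ)))⁻¹ * (π/4))) :=
      hca.continuousWithinAt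
    simpa using h2
  refine tendsto_of_tendsto_of_tendsto_of_le_of_le' tendsto_const_nhds hupper ?_ ?_
  · exact eventually_mem_nhdsWithin.mono fun x hx => g_ge_pi_div_four hx
  · exact eventually_mem_nhdsWithin.mono fun x hx => g_le_aux hx

lemma g_tendsto_one : Tendsto g (nhdsWithin 1 (Ioo (0:ℝ) 1)) (nhds 1) := by
  have hlower : Tendsto (fun x : ℝ => 1 - π / 2 * Real.sqrt (1 - x))
      (nhdsWithin 1 (Ioo (0:ℝ) 1)) (nhds 1) := by
    have hca : ContinuousAt (fun x : ℝ => 1 - π / 2 * Real.sqrt (1 - x)) 1 := by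
      have h1 : ContinuousAt (fun x : ℝ => Real.sqrt (1 - x)) 1 :=
        (Real.continuous_sqrt.comp (continuous_const.sub continuous_id)).continuousAt
      exact continuousAt_const.sub (continuousAt_const.mul h1)
    have h2 : Tendsto (fun x : ℝ => 1 - π / 2 * Real.sqrt (1 - x))
        (nhdsWithin 1 (Ioo (0:ℝ) 1)) (nhds (1 - π / 2 * Real.sqrt (1 - (1:ℝ)))) :=
      hca.continuousWithinAt
    simpa using h2
  refine tendsto_of_tendsto_of_tendsto_of_le_of_le' hlower tendsto_const_nhds ?_ ?_
  · exact eventually_mem_nhdsWithin.mono fun x hx => g_ge_aux hx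
  · exact eventually_mem_nhdsWithin.mono fun x hx => g_le_one hx

end Stmt0Aux

open Stmt0Aux in
theorem stmt0 :
    StrictMonoOn (fun x : ℝ => (E x - (1 - x) * K x) / x) (Ioo 0 1) ∧
    Tendsto (fun x : ℝ => (E x - (1 - x) * K x) / x) (nhdsWithin 0 (Ioo 0 1)) (nhds (π / 4)) ∧
    Tendsto (fun x : ℝ => (E x - (1 - x) * K x) / x) (nhdsWithin 1 (Ioo 0 1)) (nhds 1) := by
  have heq : ∀ x ∈ Ioo (0:ℝ) 1, (E x - (1 - x) * K x) / x = g x :=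
    fun x hx => key hx.1 hx.2
  refine ⟨?_, ?_, ?_⟩
  · intro a ha b hb hab
    simp only
    rw [heq a ha, heq b hb]
    exact g_strictMono ha hb hab
  · exact g_tendsto_zero.congr' (eventually_mem_nhdsWithin.mono fun x hx => (heq x hx).symm)
  · exact g_tendsto_one.congr' (eventually_mem_nhdsWithin.mono fun x hx => (heq x hx).symm)
end

section
/- The function x ↦ (E(x)² - (1-x)·K(x)²)/x² is strictly increasing on (0,1), with limit π²/32 as x → 0⁺ and limit 1 as x → 1⁻. -/
open Real Set Filter

namespace EKaux

open Topology

/-- `c n = (2n-1)!!/(2n)!!`. -/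
noncomputable def c : ℕ → ℝ
  | 0 => 1
  | n+1 => c n * (2*n+1) / (2*n+2)

lemma c_succ (n : ℕ) : c (n+1) = c n * (2*n+1) / (2*n+2) := rfl

lemma c_pos (n : ℕ) : 0 < c n := by
  induction n with
  | zero => norm_num [c]
  | succ n ih => rw [c_succ]; positivity

lemma c_le_one (n : ℕ) : c n ≤ 1 := by
  induction n with
  | zero => norm_num [c]
  | succ n ih =>
    rw [c_succ, div_le_one (by positivity)]
    nlinarith [c_pos n]

lemma c_succ_mul (n : ℕ) : c (n+1) * (2*n+2) = c n * (2*n+1) := by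
  rw [c_succ]; field_simp

lemma c_sq_bound (n : ℕ) : (2*(n:ℝ)+1) * c n ^ 2 ≤ 1 := by
  induction n with
  | zero => norm_num [c]
  | succ n ih =>
    have h2 : c (n+1) = c n * (2*n+1) / (2*n+2) := rfl
    rw [h2]
    have hp := c_pos n
    have key : (2*((n:ℝ)+1)+1) * (c n * (2*n+1) / (2*n+2))^2 ≤ (2*(n:ℝ)+1) * c n ^2 := by
      rw [div_pow, mul_div_assoc', div_le_iff₀ (by positivity)]
      have h3 : (2*((n:ℝ)+1)+1) * (2*(n:ℝ)+1) ≤ (2*(n:ℝ)+2)^2 := by nlinarith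
      nlinarith [sq_nonneg (c n), sq_nonneg ((2*(n:ℝ)+1)), sq_nonneg (c n * (2*(n:ℝ)+1))]
    push_cast
    linarith [le_trans key ih]

lemma abs_c_le_one (n : ℕ) : |c n| ≤ 1 := by
  rw [abs_of_pos (c_pos n)]; exact c_le_one n

/-! ### Generic power series tools -/

lemma summable_aux {A : ℕ → ℝ} {C x : ℝ} (hA : ∀ n, |A n| ≤ C * (n+1)) (hx : |x| < 1) :
    Summable fun n => A n * x ^ n := by
  have hg : Summable fun n : ℕ => C * ((n:ℝ) * |x| ^ n) + C * |x| ^ n := by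
    apply Summable.add
    · have hx' : ‖|x|‖ < 1 := by rwa [Real.norm_eq_abs, abs_abs]
      exact Summable.mul_left C (by simpa using summable_pow_mul_geometric_of_norm_lt_one 1 hx')
    · exact (summable_geometric_of_lt_one (abs_nonneg x) hx).mul_left C
  apply Summable.of_norm_bounded hg
  intro n
  have hC0 : (0:ℝ) ≤ C := le_trans (abs_nonneg _) (by simpa using hA 0)
  have : ‖A n * x ^ n‖ = |A n| * |x| ^ n := by
    rw [Real.norm_eq_abs, abs_mul, abs_pow]
  rw [this]
  have h1 : |A n| * |x| ^ n ≤ (C * (n+1)) * |x| ^ n :=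
    mul_le_mul_of_nonneg_right (hA n) (by positivity)
  calc |A n| * |x| ^ n ≤ (C * (n+1)) * |x| ^ n := h1
    _ = C * ((n:ℝ) * |x| ^ n) + C * |x| ^ n := by ring

lemma tsum_coef_zero (A : ℕ → ℝ) : ∑' n, A n * (0:ℝ) ^ n = A 0 := by
  rw [tsum_eq_single 0]
  · simp
  · intro n hn; simp [zero_pow hn]

lemma hasDerivAt_aux {A : ℕ → ℝ} {C x : ℝ} (hA : ∀ n, |A n| ≤ C * (n+1)) (hx : |x| < 1) :
    HasDerivAt (fun y => ∑' n, A n * y ^ n) (∑' n, A n * (n * x ^ (n - 1))) x := by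
  have hC0 : (0:ℝ) ≤ C := le_trans (abs_nonneg _) (by simpa using hA 0)
  set r : ℝ := (1 + |x|)/2 with hr
  have hr0 : 0 < r := by positivity
  have hr1 : r < 1 := by rw [hr]; linarith
  have hxr : |x| < r := by rw [hr]; linarith
  have hsum_u : Summable fun n : ℕ => C * (n+1) * ((n:ℝ) * r ^ n) / r := by
    have hrn : ‖r‖ < 1 := by rwa [Real.norm_eq_abs, abs_of_pos hr0]
    have h1 : Summable fun n : ℕ => ((n:ℝ)^2 * r ^ n) := by
      simpa using summable_pow_mul_geometric_of_norm_lt_one 2 hrn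
    have h2 : Summable fun n : ℕ => ((n:ℝ) * r ^ n) := by
      simpa using summable_pow_mul_geometric_of_norm_lt_one 1 hrn
    have := ((h1.add h2).mul_left (C / r))
    apply this.congr
    intro n
    field_simp
  apply hasDerivAt_tsum_of_isPreconnected hsum_u (Metric.isOpen_ball)
    ((convex_ball (0:ℝ) r).isPreconnected)
    (g := fun n y => A n * y ^ n) (g' := fun n y => A n * (n * y ^ (n-1)))
    (y₀ := x)
  · intro n y _
    exact (hasDerivAt_pow n y).const_mul (A n)
  · intro n y hy
    have hyr : |y| ≤ r := by
      have := Metric.mem_ball.mp hy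
      rw [Real.dist_eq, sub_zero] at this
      exact this.le
    have hb : ‖A n * (↑n * y ^ (n - 1))‖ ≤ C*(n+1) * ((n:ℝ) * r ^ (n-1)) := by
      rw [Real.norm_eq_abs, abs_mul, abs_mul, abs_pow, Nat.abs_cast]
      apply mul_le_mul (hA n) _ (by positivity) (by positivity)
      exact mul_le_mul_of_nonneg_left (pow_le_pow_left₀ (abs_nonneg y) hyr _) (Nat.cast_nonneg n)
    refine hb.trans (le_of_eq ?_)
    rcases Nat.eq_zero_or_pos n with h0 | h0
    · subst h0; simp
    · have : (n:ℝ) * r ^ (n-1) = (n:ℝ) * r ^ n / r := by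
        rw [eq_div_iff (ne_of_gt hr0), mul_assoc, ← pow_succ, Nat.sub_add_cancel h0]
      rw [this]; ring
  · rw [Metric.mem_ball, Real.dist_eq, sub_zero]; exact hxr
  · exact summable_aux hA hx
  · rw [Metric.mem_ball, Real.dist_eq, sub_zero]; exact hxr


/-! ### The binomial series `(1-u)^(-1/2)` -/

lemma abs_c_lin (n : ℕ) : |c n| ≤ 1 * ((n:ℝ)+1) := by
  have := abs_c_le_one n
  have : |c n| ≤ 1 := this
  nlinarith [abs_nonneg (c n), Nat.cast_nonneg (α := ℝ) n]

noncomputable def Sc (u : ℝ) : ℝ := ∑' n, c n * u ^ n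

lemma hasDerivAt_Sc {u : ℝ} (hu : |u| < 1) :
    HasDerivAt Sc (∑' n, c n * (n * u ^ (n-1))) u := hasDerivAt_aux abs_c_lin hu

lemma summable_deriv_aux {A : ℕ → ℝ} {C x : ℝ} (hA : ∀ n, |A n| ≤ C * (n+1)) (hx : |x| < 1) :
    Summable fun n : ℕ => A n * ((n:ℝ) * x ^ (n-1)) := by
  have hC0 : (0:ℝ) ≤ C := le_trans (abs_nonneg _) (by simpa using hA 0)
  set r : ℝ := (1 + |x|)/2 with hr
  have hr0 : 0 < r := by positivity
  have hr1 : r < 1 := by rw [hr]; linarith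
  have hxr : |x| ≤ r := by rw [hr]; linarith
  have hrn : ‖r‖ < 1 := by rwa [Real.norm_eq_abs, abs_of_pos hr0]
  have hsum_u : Summable fun n : ℕ => C * (n+1) * ((n:ℝ) * r ^ n) / r := by
    have h1 : Summable fun n : ℕ => ((n:ℝ)^2 * r ^ n) := by
      simpa using summable_pow_mul_geometric_of_norm_lt_one 2 hrn
    have h2 : Summable fun n : ℕ => ((n:ℝ) * r ^ n) := by
      simpa using summable_pow_mul_geometric_of_norm_lt_one 1 hrn
    have := ((h1.add h2).mul_left (C / r))
    apply this.congr
    intro n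
    field_simp
  apply Summable.of_norm_bounded hsum_u
  intro n
  have hb : ‖A n * (↑n * x ^ (n - 1))‖ ≤ C*(n+1) * ((n:ℝ) * r ^ (n-1)) := by
    rw [Real.norm_eq_abs, abs_mul, abs_mul, abs_pow, Nat.abs_cast]
    apply mul_le_mul (hA n) _ (by positivity) (by positivity)
    exact mul_le_mul_of_nonneg_left (pow_le_pow_left₀ (abs_nonneg x) hxr _) (Nat.cast_nonneg n)
  refine hb.trans (le_of_eq ?_)
  rcases Nat.eq_zero_or_pos n with h0 | h0
  · subst h0; simp
  · have : (n:ℝ) * r ^ (n-1) = (n:ℝ) * r ^ n / r := by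
      rw [eq_div_iff (ne_of_gt hr0), mul_assoc, ← pow_succ, Nat.sub_add_cancel h0]
    rw [this]; ring

lemma summable_Sc {u : ℝ} (hu : |u| < 1) : Summable fun n : ℕ => c n * u ^ n :=
  summable_aux abs_c_lin hu

/-- The ODE `2(1-u) Sc' = Sc`. -/
lemma Sc_ode {u : ℝ} (hu : |u| < 1) :
    2 * (1 - u) * ∑' n, c n * ((n:ℝ) * u ^ (n-1)) = Sc u := by
  have hs := summable_deriv_aux abs_c_lin hu
  -- 2(1-u) * D = ∑ 2 c n n u^{n-1} - ∑ 2 c n n u^n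
  have e1 : 2 * (1 - u) * ∑' n, c n * ((n:ℝ) * u ^ (n-1))
      = ∑' n, (2 * c n * n * u ^ (n-1) - 2 * c n * n * u ^ n) := by
    rw [← tsum_mul_left]
    apply tsum_congr
    intro n
    rcases Nat.eq_zero_or_pos n with h0 | h0
    · subst h0; simp
    · have hun : u * u ^ (n-1) = u ^ n := by
        rw [← pow_succ', Nat.sub_add_cancel h0]
      linear_combination (-2 * c n * (n:ℝ)) * hun
  have hsa : Summable (fun n : ℕ => 2 * c n * (n:ℝ) * u ^ (n-1)) := by
    apply (hs.mul_left 2).congr; intro n; ring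
  have habs2 : ∀ n : ℕ, |2 * c n * (n:ℝ)| ≤ 2 * ((n:ℝ)+1) := by
    intro n
    rw [abs_mul, abs_mul, Nat.abs_cast, abs_two, abs_of_pos (c_pos n)]
    nlinarith [c_le_one n, c_pos n, Nat.cast_nonneg (α := ℝ) n]
  have hsb : Summable (fun n : ℕ => 2 * c n * (n:ℝ) * u ^ n) := summable_aux habs2 hu
  rw [e1, Summable.tsum_sub hsa hsb]
  have hsa' : Summable (fun n : ℕ => 2 * c (n+1) * ((n:ℝ)+1) * u ^ n) := by
    have := (summable_nat_add_iff 1).2 hsa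
    apply this.congr
    intro n
    rw [Nat.add_sub_cancel]
    push_cast
    ring
  have e2 : ∑' n, 2 * c n * (n:ℝ) * u ^ (n-1) = ∑' n, 2 * c (n+1) * ((n:ℝ)+1) * u ^ n := by
    rw [Summable.tsum_eq_zero_add hsa]
    simp only [Nat.cast_zero, mul_zero, zero_mul, zero_add, Nat.cast_ofNat, Nat.add_sub_cancel]
    apply tsum_congr
    intro n
    push_cast
    ring
  rw [e2, ← Summable.tsum_sub hsa' hsb]
  apply tsum_congr
  intro n
  have hc := c_succ_mul n
  linear_combination u ^ n * hc

lemma Sc_zero : Sc 0 = 1 := by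
  rw [Sc, tsum_coef_zero]; rfl

lemma Sc_sq {u : ℝ} (hu : |u| < 1) : Sc u ^ 2 * (1 - u) = 1 := by
  have key : ∀ v ∈ Ioo (-1:ℝ) 1, HasDerivAt (fun w => Sc w ^ 2 * (1 - w)) 0 v := by
    intro v hv
    have hv' : |v| < 1 := abs_lt.2 ⟨by linarith [hv.1], hv.2⟩
    have hd := hasDerivAt_Sc hv'
    have h2 : HasDerivAt (fun w : ℝ => 1 - w) (-1) v := by
      simpa using (hasDerivAt_id v).const_sub 1
    have h1 := (hd.pow 2).mul h2
    have hode := Sc_ode hv'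
    refine h1.congr_deriv ?_
    norm_num only [pow_one, Nat.cast_ofNat, Pi.pow_apply]
    linear_combination (Sc v) * hode
  have hconst : Sc u ^ 2 * (1 - u) = Sc 0 ^ 2 * (1 - 0) := by
    have hu' : u ∈ Ioo (-1:ℝ) 1 := ⟨neg_lt_of_abs_lt hu, lt_of_abs_lt hu⟩
    have h0' : (0:ℝ) ∈ Ioo (-1:ℝ) 1 := by norm_num
    apply Convex.is_const_of_fderivWithin_eq_zero (convex_Ioo (-1:ℝ) 1)
      (fun v hv => ((key v hv).differentiableAt).differentiableWithinAt) _ hu' h0'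
    intro v hv
    rw [fderivWithin_of_isOpen isOpen_Ioo hv, (key v hv).hasFDerivAt.fderiv]
    ext w
    simp
  rw [hconst, Sc_zero]; norm_num

lemma Sc_nonneg {u : ℝ} (h0 : 0 ≤ u) (h1 : u < 1) : 0 ≤ Sc u := by
  apply tsum_nonneg
  intro n
  have := c_pos n
  positivity

lemma Sc_eq_rpow {u : ℝ} (h0 : 0 ≤ u) (h1 : u < 1) :
    Sc u = (1 - u) ^ (-(1/2) : ℝ) := by
  have hu : |u| < 1 := abs_lt.2 ⟨by linarith, h1⟩
  have h1u : (0:ℝ) < 1 - u := by linarith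
  have hsq := Sc_sq hu
  have hsq2 : Sc u ^ 2 = ((1 - u) ^ (-(1/2) : ℝ)) ^ 2 := by
    have hR2 : ((1 - u) ^ (-(1/2) : ℝ)) ^ 2 = (1 - u)⁻¹ := by
      rw [← Real.rpow_natCast ((1-u) ^ (-(1/2):ℝ)) 2, ← Real.rpow_mul h1u.le]
      norm_num
      exact Real.rpow_neg_one (1-u)
    rw [hR2]
    field_simp at hsq ⊢
    linarith [hsq]
  have hR : 0 < (1-u) ^ (-(1/2):ℝ) := Real.rpow_pos_of_pos h1u _
  have hfac : (Sc u - (1-u) ^ (-(1/2):ℝ)) * (Sc u + (1-u) ^ (-(1/2):ℝ)) = 0 := by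
    linear_combination hsq2
  rcases mul_eq_zero.1 hfac with h | h
  · linarith
  · linarith [Sc_nonneg h0 h1]

/-! ### The binomial series `(1-u)^(1/2)` -/

noncomputable def aa (n : ℕ) : ℝ := c n / (1 - 2*(n:ℝ))

lemma aa_zero : aa 0 = 1 := by norm_num [aa, c]

lemma abs_aa_le_one (n : ℕ) : |aa n| ≤ 1 := by
  rw [aa, abs_div]
  have hd : (1:ℝ) ≤ |1 - 2*(n:ℝ)| := by
    rcases Nat.eq_zero_or_pos n with h | h
    · subst h; norm_num
    · rw [abs_sub_comm, abs_of_nonneg]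
      · have : (1:ℝ) ≤ (n:ℝ) := by exact_mod_cast h
        linarith
      · have : (1:ℝ) ≤ (n:ℝ) := by exact_mod_cast h
        linarith
  calc |c n| / |1 - 2*(n:ℝ)| ≤ |c n| := div_le_self (abs_nonneg _) hd
    _ ≤ 1 := abs_c_le_one n

lemma abs_aa_lin (n : ℕ) : |aa n| ≤ 1 * ((n:ℝ)+1) := by
  have := abs_aa_le_one n
  nlinarith [abs_nonneg (aa n), Nat.cast_nonneg (α := ℝ) n]

lemma aa_succ (n : ℕ) : aa (n+1) = c (n+1) - c n := by
  have hc := c_succ_mul n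
  rw [aa]
  have hd : (1 - 2*((n:ℝ)+1)) ≠ 0 := by
    intro h
    have : (n:ℝ) ≥ 0 := Nat.cast_nonneg n
    nlinarith
  push_cast
  rw [div_eq_iff hd]
  nlinarith [hc]

lemma summable_aa {u : ℝ} (hu : |u| < 1) : Summable fun n : ℕ => aa n * u ^ n :=
  summable_aux abs_aa_lin hu

lemma tsum_aa {u : ℝ} (hu : |u| < 1) :
    ∑' n, aa n * u ^ n = (1 - u) * Sc u := by
  have hsaa := summable_aa hu
  have hsc := summable_Sc hu
  have hst : Summable fun n : ℕ => c (n+1) * u ^ (n+1) := (summable_nat_add_iff 1).2 hsc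
  have hsu : Summable fun n : ℕ => c n * u ^ (n+1) := by
    apply (hsc.mul_left u).congr
    intro n; ring
  rw [Summable.tsum_eq_zero_add hsaa]
  simp only [pow_zero, mul_one, aa_zero]
  have e1 : ∀ n : ℕ, aa (n+1) * u ^ (n+1) = c (n+1) * u ^ (n+1) - c n * u ^ (n+1) := by
    intro n; rw [aa_succ]; ring
  rw [tsum_congr e1, Summable.tsum_sub hst hsu]
  have e2 : ∑' n, c (n+1) * u ^ (n+1) = Sc u - 1 := by
    have := Summable.tsum_eq_zero_add hsc
    rw [Sc]
    simp only [pow_zero, mul_one] at this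
    rw [this]
    norm_num [show c 0 = 1 from rfl]
  have e3 : ∑' n, c n * u ^ (n+1) = u * Sc u := by
    rw [Sc, ← tsum_mul_left]
    apply tsum_congr
    intro n; ring
  rw [e2, e3]
  ring

lemma tsum_aa_rpow {u : ℝ} (h0 : 0 ≤ u) (h1 : u < 1) :
    ∑' n, aa n * u ^ n = (1 - u) ^ ((1/2) : ℝ) := by
  have hu : |u| < 1 := abs_lt.2 ⟨by linarith, h1⟩
  have h1u : (0:ℝ) < 1 - u := by linarith
  rw [tsum_aa hu, Sc_eq_rpow h0 h1]
  nth_rewrite 1 [← Real.rpow_one (1-u)]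
  rw [← Real.rpow_add h1u]
  norm_num


/-! ### Wallis integrals -/

lemma wallis (n : ℕ) : ∫ t in (0:ℝ)..(π/2), Real.sin t ^ (2*n) = (π/2) * c n := by
  induction n with
  | zero => simp [c]
  | succ n ih =>
    have h2 : 2*(n+1) = 2*n + 2 := by ring
    rw [h2, integral_sin_pow]
    simp only [Real.sin_zero, Real.cos_zero, Real.sin_pi_div_two, Real.cos_pi_div_two]
    rw [ih]
    have hc := c_succ_mul n
    have h2n : (2*(n:ℝ)+2) ≠ 0 := by positivity
    push_cast
    rw [zero_pow (by omega), zero_mul, mul_zero, zero_sub, neg_zero, zero_div, zero_add]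
    rw [div_mul_eq_mul_div, div_eq_iff h2n]
    linear_combination (-(π/2)) * hc

/-- Transfer an interval integral over `[0, π/2]` of a series of the form
`coef n * x^n * sin^(2n)` -/
lemma integral_series (B : ℕ → ℝ) (hB : ∀ n, |B n| ≤ 1) {x : ℝ} (h0 : 0 ≤ x) (h1 : x < 1) :
    ∫ t in (0:ℝ)..(π/2), (∑' n, B n * (x * Real.sin t ^ 2) ^ n)
      = (π/2) * ∑' n, (B n * c n) * x ^ n := by
  have hpi : (0:ℝ) ≤ π/2 := by positivity
  have key : ∫ t in (0:ℝ)..(π/2), (∑' n, B n * (x * Real.sin t ^ 2) ^ n)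
      = ∑' n, ∫ t in (0:ℝ)..(π/2), (B n * x ^ n) * Real.sin t ^ (2*n) := by
    rw [intervalIntegral.integral_of_le hpi]
    have heq : ∀ t : ℝ, (∑' n, B n * (x * Real.sin t ^ 2) ^ n)
        = ∑' n, (B n * x ^ n) * Real.sin t ^ (2*n) := by
      intro t
      apply tsum_congr
      intro n
      rw [mul_pow, pow_mul]
      ring
    simp_rw [heq]
    have hint : ∀ i : ℕ, MeasureTheory.IntegrableOn
        (fun t => B i * x ^ i * Real.sin t ^ (2*i)) (Ioc (0:ℝ) (π/2))
        MeasureTheory.volume := by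
      intro i
      apply Continuous.integrableOn_Ioc
      fun_prop
    have hval : ∀ i : ℕ, (∫ t in Ioc (0:ℝ) (π/2), ‖B i * x ^ i * Real.sin t ^ (2*i)‖)
        = |B i * x ^ i| * ((π/2) * c i) := by
      intro i
      have habs : ∀ t : ℝ, ‖B i * x ^ i * Real.sin t ^ (2*i)‖
          = |B i * x ^ i| * Real.sin t ^ (2*i) := by
        intro t
        rw [Real.norm_eq_abs, abs_mul, pow_mul, abs_of_nonneg (pow_nonneg (sq_nonneg (Real.sin t)) i)]
      simp_rw [habs]
      rw [MeasureTheory.integral_const_mul, ← intervalIntegral.integral_of_le hpi, wallis]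
    have hsum : Summable fun i : ℕ =>
        ∫ t in Ioc (0:ℝ) (π/2), ‖B i * x ^ i * Real.sin t ^ (2*i)‖ := by
      apply Summable.of_nonneg_of_le
        (fun i => MeasureTheory.integral_nonneg (fun t => norm_nonneg _))
        (fun i => ?_) (((summable_geometric_of_lt_one h0 h1)).mul_left (π/2))
      rw [hval]
      have h1' : |B i * x ^ i| ≤ x ^ i := by
        rw [abs_mul, abs_pow, abs_of_nonneg h0]
        calc |B i| * x ^ i ≤ 1 * x ^ i :=
          mul_le_mul_of_nonneg_right (hB i) (by positivity)
        _ = x ^ i := one_mul _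
      have h2' : (π/2) * c i ≤ π/2 := by
        nlinarith [c_le_one i, c_pos i, Real.pi_pos]
      calc |B i * x ^ i| * ((π/2) * c i) ≤ x ^ i * (π/2) :=
        mul_le_mul h1' h2' (by nlinarith [c_pos i, Real.pi_pos]) (by positivity)
      _ = π/2 * x ^ i := by ring
    rw [← MeasureTheory.integral_tsum_of_summable_integral_norm hint hsum]
    apply tsum_congr
    intro n
    rw [intervalIntegral.integral_of_le hpi]
  rw [key]
  rw [← tsum_mul_left]
  apply tsum_congr
  intro n
  rw [intervalIntegral.integral_const_mul, wallis]
  ring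


/-! ### Series representations of K and E -/

noncomputable def KC (n : ℕ) : ℝ := c n * c n
noncomputable def EC (n : ℕ) : ℝ := aa n * c n

lemma u_mem {x : ℝ} (h0 : 0 ≤ x) (h1 : x < 1) (t : ℝ) :
    0 ≤ x * Real.sin t ^ 2 ∧ x * Real.sin t ^ 2 < 1 := by
  constructor
  · positivity
  · have hs : Real.sin t ^ 2 ≤ 1 := Real.sin_sq_le_one t
    nlinarith

lemma K_eq {x : ℝ} (h0 : 0 ≤ x) (h1 : x < 1) :
    K x = (π/2) * ∑' n, KC n * x ^ n := by
  have heq : ∀ t : ℝ, (1 - x * Real.sin t ^ 2) ^ (-(1/2) : ℝ)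
      = ∑' n, c n * (x * Real.sin t ^ 2) ^ n := by
    intro t
    obtain ⟨hu0, hu1⟩ := u_mem h0 h1 t
    rw [← Sc_eq_rpow hu0 hu1]
    rfl
  rw [K]
  simp_rw [heq]
  rw [integral_series c abs_c_le_one h0 h1]
  rfl

lemma E_eq {x : ℝ} (h0 : 0 ≤ x) (h1 : x < 1) :
    E x = (π/2) * ∑' n, EC n * x ^ n := by
  have heq : ∀ t : ℝ, (1 - x * Real.sin t ^ 2) ^ ((1/2) : ℝ)
      = ∑' n, aa n * (x * Real.sin t ^ 2) ^ n := by
    intro t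
    obtain ⟨hu0, hu1⟩ := u_mem h0 h1 t
    rw [tsum_aa_rpow hu0 hu1]
  rw [E]
  simp_rw [heq]
  rw [integral_series aa abs_aa_le_one h0 h1]
  rfl


/-! ### Coefficient sequences for the combination -/

noncomputable def gam (n : ℕ) : ℝ := KC n - EC n
noncomputable def G (n : ℕ) : ℝ := ∑ k ∈ Finset.range (n+1), gam k * gam (n-k)
noncomputable def HN (n : ℕ) : ℝ := G n / n

lemma abs_KC_le_one (n : ℕ) : |KC n| ≤ 1 := by
  rw [KC, abs_mul]
  calc |c n| * |c n| ≤ 1 * 1 := mul_le_mul (abs_c_le_one n) (abs_c_le_one n)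
        (abs_nonneg _) zero_le_one
    _ = 1 := one_mul 1

lemma abs_EC_le_one (n : ℕ) : |EC n| ≤ 1 := by
  rw [EC, abs_mul]
  calc |aa n| * |c n| ≤ 1 * 1 := mul_le_mul (abs_aa_le_one n) (abs_c_le_one n)
        (abs_nonneg _) zero_le_one
    _ = 1 := one_mul 1

lemma abs_KC_lin (n : ℕ) : |KC n| ≤ 1 * ((n:ℝ)+1) := by
  nlinarith [abs_KC_le_one n, abs_nonneg (KC n), Nat.cast_nonneg (α := ℝ) n]

lemma abs_EC_lin (n : ℕ) : |EC n| ≤ 1 * ((n:ℝ)+1) := by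
  nlinarith [abs_EC_le_one n, abs_nonneg (EC n), Nat.cast_nonneg (α := ℝ) n]

lemma gam_zero : gam 0 = 0 := by
  norm_num [gam, KC, EC, aa_zero, show c 0 = 1 from rfl]

lemma gam_nonneg (n : ℕ) : 0 ≤ gam n := by
  cases n with
  | zero => rw [gam_zero]
  | succ m =>
    rw [gam, KC, EC, aa]
    have hc := c_pos (m+1)
    have hd : (1 - 2*((m+1:ℕ):ℝ)) < 0 := by push_cast; nlinarith [Nat.cast_nonneg (α := ℝ) m]
    have h2 : c (m+1) / (1 - 2*((m+1:ℕ):ℝ)) ≤ 0 := div_nonpos_of_nonneg_of_nonpos hc.le hd.le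
    nlinarith

lemma abs_gam_le_two (n : ℕ) : |gam n| ≤ 2 := by
  rw [abs_of_nonneg (gam_nonneg n), gam]
  have h1 := abs_KC_le_one n
  have h2 := abs_EC_le_one n
  rw [abs_le] at h1 h2
  linarith [h1.2, h2.1]

lemma abs_gam_lin (n : ℕ) : |gam n| ≤ 2 * ((n:ℝ)+1) := by
  nlinarith [abs_gam_le_two n, abs_nonneg (gam n), Nat.cast_nonneg (α := ℝ) n]

lemma G_nonneg (n : ℕ) : 0 ≤ G n :=
  Finset.sum_nonneg fun k _ => mul_nonneg (gam_nonneg k) (gam_nonneg (n-k))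

lemma abs_G_lin (n : ℕ) : |G n| ≤ 4 * ((n:ℝ)+1) := by
  rw [abs_of_nonneg (G_nonneg n)]
  calc G n ≤ ∑ k ∈ Finset.range (n+1), 4 := by
        apply Finset.sum_le_sum
        intro k _
        have h1 := abs_gam_le_two k
        have h2 := abs_gam_le_two (n-k)
        have g1 := gam_nonneg k
        have g2 := gam_nonneg (n-k)
        rw [abs_of_nonneg g1] at h1
        rw [abs_of_nonneg g2] at h2
        nlinarith
    _ = 4 * ((n:ℝ)+1) := by
        rw [Finset.sum_const, Finset.card_range]
        push_cast
        ring

lemma HN_nonneg (n : ℕ) : 0 ≤ HN n := by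
  rw [HN]
  cases n with
  | zero => simp
  | succ m => exact div_nonneg (G_nonneg _) (by positivity)

lemma abs_HN_lin (n : ℕ) : |HN n| ≤ 4 * ((n:ℝ)+1) := by
  rw [HN]
  cases n with
  | zero => simp
  | succ m =>
    have hm : (1:ℝ) ≤ ((m+1:ℕ):ℝ) := by exact_mod_cast Nat.one_le_iff_ne_zero.2 (Nat.succ_ne_zero m)
    rw [abs_div, Nat.abs_cast]
    calc |G (m+1)| / ((m+1:ℕ):ℝ) ≤ |G (m+1)| := div_le_self (abs_nonneg _) hm
      _ ≤ 4 * (((m+1:ℕ):ℝ)+1) := abs_G_lin (m+1)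

/-! ### Power series functions -/

noncomputable def SK (x : ℝ) : ℝ := ∑' n, KC n * x ^ n
noncomputable def SE (x : ℝ) : ℝ := ∑' n, EC n * x ^ n
noncomputable def SM (x : ℝ) : ℝ := ∑' n, HN n * x ^ n
noncomputable def DSK (x : ℝ) : ℝ := ∑' n, KC n * ((n:ℝ) * x ^ (n-1))
noncomputable def DSE (x : ℝ) : ℝ := ∑' n, EC n * ((n:ℝ) * x ^ (n-1))
noncomputable def DSM (x : ℝ) : ℝ := ∑' n, HN n * ((n:ℝ) * x ^ (n-1))

lemma hasDerivAt_SK {x : ℝ} (hx : |x| < 1) : HasDerivAt SK (DSK x) x :=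
  hasDerivAt_aux abs_KC_lin hx
lemma hasDerivAt_SE {x : ℝ} (hx : |x| < 1) : HasDerivAt SE (DSE x) x :=
  hasDerivAt_aux abs_EC_lin hx
lemma hasDerivAt_SM {x : ℝ} (hx : |x| < 1) : HasDerivAt SM (DSM x) x :=
  hasDerivAt_aux abs_HN_lin hx

lemma summable_SK {x : ℝ} (hx : |x| < 1) : Summable fun n : ℕ => KC n * x ^ n :=
  summable_aux abs_KC_lin hx
lemma summable_SE {x : ℝ} (hx : |x| < 1) : Summable fun n : ℕ => EC n * x ^ n :=
  summable_aux abs_EC_lin hx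
lemma summable_gam {x : ℝ} (hx : |x| < 1) : Summable fun n : ℕ => gam n * x ^ n :=
  summable_aux abs_gam_lin hx
lemma summable_HN {x : ℝ} (hx : |x| < 1) : Summable fun n : ℕ => HN n * x ^ n :=
  summable_aux abs_HN_lin hx


/-! ### Termwise derivative identities -/

lemma aa_mul (n : ℕ) : aa n * (1 - 2*(n:ℝ)) = c n := by
  rw [aa]
  have hd : (1 - 2*(n:ℝ)) ≠ 0 := by
    rcases Nat.eq_zero_or_pos n with h | h
    · subst h; norm_num
    · have : (1:ℝ) ≤ (n:ℝ) := by exact_mod_cast h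
      intro hq; nlinarith
  field_simp

/-- `2x E' = E - K` at series level. -/
lemma identity_E {x : ℝ} (hx : |x| < 1) : 2 * x * DSE x = SE x - SK x := by
  rw [DSE, SE, SK, ← Summable.tsum_sub (summable_SE hx) (summable_SK hx), ← tsum_mul_left]
  apply tsum_congr
  intro n
  rcases Nat.eq_zero_or_pos n with h0 | h0
  · subst h0
    norm_num [EC, KC, aa_zero, show c 0 = 1 from rfl]
  · have hxp : x * x ^ (n-1) = x ^ n := by
      rw [← pow_succ', Nat.sub_add_cancel h0]
    have haa := aa_mul n
    have hEC : EC n * (1 - 2*(n:ℝ)) = KC n := by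
      rw [EC, KC, ← haa]; ring
    linear_combination (2 * (n:ℝ) * EC n) * hxp - x ^ n * hEC

/-- Key coefficient identity for the derivative of K. -/
lemma Lcoef (n : ℕ) : (2*(n:ℝ)+3) * KC (n+1) - EC (n+1) = (2*(n:ℝ)+1) * KC n := by
  have hc := c_succ_mul n
  have haa := aa_mul (n+1)
  have hEC : EC (n+1) * (2*(n:ℝ)+1) = -(c (n+1) * c (n+1)) := by
    rw [EC]
    push_cast at haa
    linear_combination (- c (n+1)) * haa
  rw [KC, KC]
  have h1 : ((2*(n:ℝ)+3) * (c (n+1) * c (n+1)) - EC (n+1)) * (2*(n:ℝ)+1)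
      = ((2*(n:ℝ)+1) * (c n * c n)) * (2*(n:ℝ)+1) := by
    push_cast at hc
    linear_combination (-1) * hEC + (((2*(n:ℝ)+1) * c n + (2*(n:ℝ)+2) * c (n+1))) * hc
  have hne : (2*(n:ℝ)+1) ≠ 0 := by positivity
  exact mul_right_cancel₀ hne h1

/-- `2x(1-x) K' = E - (1-x) K` at series level. -/
lemma identity_K {x : ℝ} (hx : |x| < 1) :
    2 * x * (1-x) * DSK x = SE x - (1-x) * SK x := by
  have hsK := summable_SK hx
  have hsE := summable_SE hx
  have hsKs : Summable fun n : ℕ => KC n * x ^ (n+1) := by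
    apply (hsK.mul_left x).congr; intro n; ring
  have habs2 : ∀ n : ℕ, |2 * (n:ℝ) * KC n| ≤ 2 * ((n:ℝ)+1) := by
    intro n
    rw [abs_mul, abs_mul, Nat.abs_cast, abs_two]
    nlinarith [abs_KC_le_one n, abs_nonneg (KC n), Nat.cast_nonneg (α := ℝ) n]
  have hsP : Summable fun n : ℕ => 2 * (n:ℝ) * KC n * x ^ n := by
    have := summable_aux habs2 hx
    apply this.congr; intro n; ring
  have hsQ : Summable fun n : ℕ => 2 * (n:ℝ) * KC n * x ^ (n+1) := by
    have := hsP.mul_left x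
    apply this.congr; intro n; ring
  -- LHS = ∑ (2n KC n x^n - 2n KC n x^{n+1})
  have e1 : 2 * x * (1-x) * DSK x
      = ∑' n : ℕ, (2 * (n:ℝ) * KC n * x ^ n - 2 * (n:ℝ) * KC n * x ^ (n+1)) := by
    rw [DSK, ← tsum_mul_left]
    apply tsum_congr
    intro n
    rcases Nat.eq_zero_or_pos n with h0 | h0
    · subst h0; simp
    · have hxp : x * x ^ (n-1) = x ^ n := by
        rw [← pow_succ', Nat.sub_add_cancel h0]
      have hxp1 : x ^ (n+1) = x * x ^ n := by rw [pow_succ']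
      linear_combination (2 * (n:ℝ) * KC n * (1 - x)) * hxp
        + (2 * (n:ℝ) * KC n) * hxp1
  rw [e1, Summable.tsum_sub hsP hsQ]
  -- RHS = ∑ EC x^n - ∑ KC x^n + ∑ KC x^{n+1}
  have e2 : SE x - (1-x) * SK x
      = (∑' n, EC n * x ^ n) - (∑' n, KC n * x ^ n) + (∑' n, KC n * x ^ (n+1)) := by
    rw [SE, SK, sub_mul, one_mul, ← tsum_mul_left]
    have : ∑' n, x * (KC n * x ^ n) = ∑' n, KC n * x ^ (n+1) := by
      apply tsum_congr; intro n; ring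
    rw [this]
    ring
  rw [e2]
  -- rearrange to the shifted identity
  have hsL : Summable fun n : ℕ => (2*(n:ℝ)+1) * KC n * x ^ n - EC n * x ^ n := by
    apply ((hsP.add hsK).sub hsE).congr
    intro n; ring
  have key : ∑' n : ℕ, ((2*(n:ℝ)+1) * KC n * x ^ n - EC n * x ^ n)
      = ∑' n : ℕ, (2*(n:ℝ)+1) * KC n * x ^ (n+1) := by
    rw [Summable.tsum_eq_zero_add hsL]
    have h00 : (2*((0:ℕ):ℝ)+1) * KC 0 * x ^ 0 - EC 0 * x ^ 0 = 0 := by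
      norm_num [KC, EC, aa_zero, show c 0 = 1 from rfl]
    rw [h00, zero_add]
    apply tsum_congr
    intro n
    have := Lcoef n
    push_cast
    linear_combination x ^ (n+1) * this
  have hsL1 : Summable fun n : ℕ => (2*(n:ℝ)+1) * KC n * x ^ n := by
    apply (hsP.add hsK).congr; intro n; ring
  have hsL2 : Summable fun n : ℕ => (2*(n:ℝ)+1) * KC n * x ^ (n+1) := by
    apply (hsL1.mul_left x).congr; intro n; ring
  have expand : ∑' n : ℕ, ((2*(n:ℝ)+1) * KC n * x ^ n - EC n * x ^ n)
      = (∑' n : ℕ, 2*(n:ℝ) * KC n * x ^ n) + (∑' n : ℕ, KC n * x ^ n) - ∑' n : ℕ, EC n * x ^ n := by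
    rw [← Summable.tsum_add hsP hsK, ← Summable.tsum_sub (hsP.add hsK) hsE]
    apply tsum_congr; intro n; ring
  have expand2 : ∑' n : ℕ, (2*(n:ℝ)+1) * KC n * x ^ (n+1)
      = (∑' n : ℕ, 2*(n:ℝ) * KC n * x ^ (n+1)) + (∑' n : ℕ, KC n * x ^ (n+1)) := by
    rw [← Summable.tsum_add hsQ hsKs]
    apply tsum_congr; intro n; ring
  rw [expand, expand2] at key
  linarith [key]

/-- Cauchy product: `(SK - SE)^2 = ∑ G n x^n`. -/
lemma identity_G {x : ℝ} (hx : |x| < 1) :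
    (SK x - SE x) * (SK x - SE x) = ∑' n, G n * x ^ n := by
  have hg := summable_gam hx
  have hgn : Summable fun n : ℕ => ‖gam n * x ^ n‖ := summable_norm_iff.2 hg
  have hKE : SK x - SE x = ∑' n, gam n * x ^ n := by
    rw [SK, SE, ← Summable.tsum_sub (summable_SK hx) (summable_SE hx)]
    apply tsum_congr; intro n; rw [gam]; ring
  rw [hKE, tsum_mul_tsum_eq_tsum_sum_range_of_summable_norm hgn hgn]
  apply tsum_congr
  intro n
  rw [G, Finset.sum_mul]
  apply Finset.sum_congr rfl
  intro k hk
  have hkn : k ≤ n := Nat.lt_succ_iff.1 (Finset.mem_range.1 hk)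
  have : x ^ k * x ^ (n-k) = x ^ n := by
    rw [← pow_add, Nat.add_sub_cancel' hkn]
  linear_combination (gam k * gam (n-k)) * this

/-- `x M' = (SK - SE)^2` at series level. -/
lemma identity_M {x : ℝ} (hx : |x| < 1) :
    x * DSM x = (SK x - SE x) * (SK x - SE x) := by
  rw [identity_G hx, DSM, ← tsum_mul_left]
  apply tsum_congr
  intro n
  rcases Nat.eq_zero_or_pos n with h0 | h0
  · subst h0
    simp [G, gam_zero]
  · have hxp : x * x ^ (n-1) = x ^ n := by
      rw [← pow_succ', Nat.sub_add_cancel h0]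
    have hHN : HN n * (n:ℝ) = G n := by
      rw [HN, div_mul_cancel₀]
      exact_mod_cast Nat.pos_iff_ne_zero.1 h0
    linear_combination ((n:ℝ) * HN n) * hxp + x ^ n * hHN


/-! ### The function `Φ = SE² - (1-x)SK² - SM` is zero -/

noncomputable def Phi (x : ℝ) : ℝ := SE x ^ 2 - (1-x) * SK x ^ 2 - SM x

noncomputable def DPhi (x : ℝ) : ℝ :=
  2 * SE x ^ 1 * DSE x - (-1 * SK x ^ 2 + (1-x) * (2 * SK x ^ 1 * DSK x)) - DSM x

lemma hasDerivAt_Phi {x : ℝ} (hx : |x| < 1) : HasDerivAt Phi (DPhi x) x := by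
  have hE2 := (hasDerivAt_SE hx).pow 2
  have hK2 := (hasDerivAt_SK hx).pow 2
  have h1x : HasDerivAt (fun y : ℝ => 1 - y) (-1) x := by
    simpa using (hasDerivAt_id x).const_sub 1
  have hprod := h1x.mul hK2
  have := (hE2.sub hprod).sub (hasDerivAt_SM hx)
  have e : Phi = SE ^ 2 - (fun y : ℝ => 1 - y) * SK ^ 2 - SM := by
    funext y; simp only [Phi, Pi.sub_apply, Pi.mul_apply, Pi.pow_apply]
  rw [e]
  refine this.congr_deriv ?_
  simp only [DPhi, Pi.pow_apply]; norm_num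

lemma DPhi_zero {x : ℝ} (hx0 : 0 < x) (hx1 : x < 1) : DPhi x = 0 := by
  have hx : |x| < 1 := abs_lt.2 ⟨by linarith, hx1⟩
  have hE := identity_E hx
  have hK := identity_K hx
  have hM := identity_M hx
  have hmul : x * DPhi x = 0 := by
    have hD : DPhi x = 2 * SE x ^ 1 * DSE x
        - (-1 * SK x ^ 2 + (1-x) * (2 * SK x ^ 1 * DSK x)) - DSM x := rfl
    rw [hD]
    linear_combination SE x * hE - SK x * hK - hM
  rcases mul_eq_zero.1 hmul with h | h
  · exact absurd h (ne_of_gt hx0)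
  · exact h

lemma SE_zero : SE 0 = 1 := by
  rw [SE, tsum_coef_zero]; norm_num [EC, aa_zero, show c 0 = 1 from rfl]

lemma SK_zero : SK 0 = 1 := by
  rw [SK, tsum_coef_zero]; norm_num [KC, show c 0 = 1 from rfl]

lemma SM_zero : SM 0 = 0 := by
  rw [SM, tsum_coef_zero]; norm_num [HN]

lemma Phi_zero : Phi 0 = 0 := by
  rw [Phi, SE_zero, SK_zero, SM_zero]; norm_num

lemma Phi_eq_zero {x : ℝ} (hx0 : 0 < x) (hx1 : x < 1) : Phi x = 0 := by
  have hconst : ∀ y ∈ Ioo (0:ℝ) 1, Phi y = Phi x := by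
    intro y hy
    apply Convex.is_const_of_fderivWithin_eq_zero (convex_Ioo (0:ℝ) 1)
      (fun v hv => ((hasDerivAt_Phi (abs_lt.2 ⟨by linarith [hv.1], hv.2⟩)).differentiableAt).differentiableWithinAt)
      _ hy ⟨hx0, hx1⟩
    intro v hv
    have hv' : |v| < 1 := abs_lt.2 ⟨by linarith [hv.1], hv.2⟩
    have hd := hasDerivAt_Phi hv'
    rw [DPhi_zero hv.1 hv.2] at hd
    rw [fderivWithin_of_isOpen isOpen_Ioo hv, hd.hasFDerivAt.fderiv]
    ext w
    simp
  have hseq : Tendsto (fun n : ℕ => x / (n+1)) atTop (𝓝 0) := by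
    have h1 : Tendsto (fun n : ℕ => 1 / ((n:ℝ)+1)) atTop (𝓝 0) :=
      tendsto_one_div_add_atTop_nhds_zero_nat
    have := h1.const_mul x
    simpa using this.congr (fun n => by ring)
  have hcont : ContinuousAt Phi 0 := (hasDerivAt_Phi (by norm_num)).continuousAt
  have htends : Tendsto (fun n : ℕ => Phi (x / (n+1))) atTop (𝓝 (Phi 0)) :=
    (hcont.tendsto).comp hseq
  have hmem : ∀ n : ℕ, x / ((n:ℝ)+1) ∈ Ioo (0:ℝ) 1 := by
    intro n
    constructor
    · positivity
    · have h1 : (1:ℝ) ≤ (n:ℝ)+1 := by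
        have : (0:ℝ) ≤ (n:ℝ) := Nat.cast_nonneg n
        linarith
      calc x / ((n:ℝ)+1) ≤ x / 1 := by
            apply div_le_div_of_nonneg_left hx0.le ?_ h1
            norm_num
        _ = x := div_one x
        _ < 1 := hx1
  have hconst2 : (fun n : ℕ => Phi (x / (n+1))) = fun _ : ℕ => Phi x := by
    funext n
    exact hconst _ (hmem n)
  rw [hconst2] at htends
  have := tendsto_nhds_unique htends tendsto_const_nhds
  rw [Phi_zero] at this
  exact this.symm

/-! ### Series form of the target function -/

lemma HN_one : HN 1 = 0 := by
  rw [HN, G]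
  rw [Finset.sum_range_succ, Finset.sum_range_succ]
  simp [gam_zero]

lemma SM_shift {x : ℝ} (hx : |x| < 1) :
    SM x = x^2 * ∑' n, HN (n+2) * x ^ n := by
  have hs := summable_HN hx
  have hs1 : Summable fun n : ℕ => HN (n+1) * x ^ (n+1) := (summable_nat_add_iff 1).2 hs
  rw [SM, Summable.tsum_eq_zero_add hs]
  rw [show HN 0 = 0 by rw [HN]; simp, zero_mul, zero_add]
  rw [Summable.tsum_eq_zero_add hs1]
  rw [HN_one, zero_mul, zero_add]
  rw [← tsum_mul_left]
  apply tsum_congr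
  intro n
  ring

noncomputable def hcoef (n : ℕ) : ℝ := (π/2)^2 * HN (n+2)

lemma hcoef_nonneg (n : ℕ) : 0 ≤ hcoef n := by
  rw [hcoef]
  have := HN_nonneg (n+2)
  positivity

lemma abs_hcoef_lin (n : ℕ) : |hcoef n| ≤ (12 * (π/2)^2) * ((n:ℝ)+1) := by
  rw [hcoef, abs_mul, abs_of_nonneg (by positivity : (0:ℝ) ≤ (π/2)^2)]
  have h1 := abs_HN_lin (n+2)
  push_cast at h1
  have h2 : 4 * ((n:ℝ)+2+1) ≤ 12 * ((n:ℝ)+1) := by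
    nlinarith [Nat.cast_nonneg (α := ℝ) n]
  calc (π/2)^2 * |HN (n+2)| ≤ (π/2)^2 * (4 * ((n:ℝ)+2+1)) :=
        mul_le_mul_of_nonneg_left (h1) (by positivity)
    _ ≤ (π/2)^2 * (12 * ((n:ℝ)+1)) := mul_le_mul_of_nonneg_left h2 (by positivity)
    _ = (12 * (π/2)^2) * ((n:ℝ)+1) := by ring

lemma summable_hcoef {x : ℝ} (hx : |x| < 1) : Summable fun n : ℕ => hcoef n * x ^ n :=
  summable_aux abs_hcoef_lin hx

lemma fval_eq {x : ℝ} (hx0 : 0 < x) (hx1 : x < 1) :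
    (E x ^ 2 - (1 - x) * K x ^ 2) / x ^ 2 = ∑' n, hcoef n * x ^ n := by
  have hx : |x| < 1 := abs_lt.2 ⟨by linarith, hx1⟩
  have hK := K_eq hx0.le hx1
  have hE := E_eq hx0.le hx1
  have hPhi := Phi_eq_zero hx0 hx1
  rw [Phi] at hPhi
  have hNM : SE x ^ 2 - (1-x) * SK x ^ 2 = SM x := by linarith
  have hK: K x = (π/2) * SK x := hK
  have hE': E x = (π/2) * SE x := hE
  have hx2 : x^2 ≠ 0 := by positivity
  have key : E x ^ 2 - (1 - x) * K x ^ 2 = x^2 * ∑' n, hcoef n * x ^ n := by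
    rw [hE', hK]
    calc ((π/2) * SE x) ^ 2 - (1-x) * ((π/2) * SK x) ^ 2
        = (π/2)^2 * (SE x ^ 2 - (1-x) * SK x ^ 2) := by ring
      _ = (π/2)^2 * SM x := by rw [hNM]
      _ = (π/2)^2 * (x^2 * ∑' n, HN (n+2) * x ^ n) := by rw [SM_shift hx]
      _ = x^2 * ((π/2)^2 * ∑' n, HN (n+2) * x ^ n) := by ring
      _ = x^2 * ∑' n, hcoef n * x ^ n := by
          rw [← tsum_mul_left]
          congr 1
          apply tsum_congr
          intro n
          rw [hcoef]
          ring
  rw [key, mul_comm, mul_div_assoc, div_self hx2, mul_one]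


/-! ### Numeric values -/

lemma c_zero : c 0 = 1 := rfl
lemma c_one : c 1 = 1/2 := by rw [c_succ]; norm_num [c_zero]
lemma c_two : c 2 = 3/8 := by rw [c_succ, c_one]; norm_num

lemma gam_one : gam 1 = 1/2 := by
  rw [gam, KC, EC, aa, c_one]; norm_num

lemma gam_two : gam 2 = 3/16 := by
  rw [gam, KC, EC, aa, c_two]; norm_num

lemma HN_two : HN 2 = 1/8 := by
  rw [HN, G, Finset.sum_range_succ, Finset.sum_range_succ, Finset.sum_range_succ]
  norm_num [gam_zero, gam_one, gam_two]

lemma HN_three : HN 3 = 1/16 := by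
  rw [HN, G, Finset.sum_range_succ, Finset.sum_range_succ, Finset.sum_range_succ,
    Finset.sum_range_succ]
  norm_num [gam_zero, gam_one, gam_two]

lemma hcoef_zero : hcoef 0 = π^2/32 := by
  rw [hcoef, show (0+2 : ℕ) = 2 from rfl, HN_two]; ring

lemma hcoef_one : hcoef 1 = π^2/64 := by
  rw [hcoef, show (1+2 : ℕ) = 3 from rfl, HN_three]; ring

/-! ### Main part 1: strict monotonicity -/

lemma part1 : StrictMonoOn (fun x : ℝ => (E x ^ 2 - (1 - x) * K x ^ 2) / x ^ 2) (Ioo 0 1) := by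
  intro x hx y hy hxy
  simp only
  rw [fval_eq hx.1 hx.2, fval_eq hy.1 hy.2]
  have hy1 : |y| < 1 := abs_lt.2 ⟨by linarith [hy.1], hy.2⟩
  apply Summable.tsum_lt_tsum_of_nonneg (i := 1)
  · intro b
    exact mul_nonneg (hcoef_nonneg b) (pow_nonneg hx.1.le b)
  · intro b
    exact mul_le_mul_of_nonneg_left (pow_le_pow_left₀ hx.1.le hxy.le b) (hcoef_nonneg b)
  · rw [hcoef_one]
    have hpi := Real.pi_pos
    have h64 : (0:ℝ) < π^2/64 := by positivity
    simp only [pow_one]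
    exact mul_lt_mul_of_pos_left hxy h64
  · exact summable_hcoef hy1

/-! ### Main part 2: limit at 0 -/

lemma summable_hcoef_shift : Summable fun n : ℕ => hcoef (n+1) * (1/2:ℝ) ^ n := by
  have hb : ∀ n : ℕ, |hcoef (n+1)| ≤ (24 * (π/2)^2) * ((n:ℝ)+1) := by
    intro n
    have h1 := abs_hcoef_lin (n+1)
    push_cast at h1
    have h2 : (12 * (π/2)^2) * ((n:ℝ)+1+1) ≤ (24 * (π/2)^2) * ((n:ℝ)+1) := by
      nlinarith [Nat.cast_nonneg (α := ℝ) n, Real.pi_pos, sq_nonneg π]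
    linarith
  have habs : |(1/2 : ℝ)| < 1 := by rw [abs_of_nonneg] <;> norm_num
  exact summable_aux hb habs

noncomputable def Cb : ℝ := ∑' n, hcoef (n+1) * (1/2:ℝ) ^ n

lemma Cb_nonneg : 0 ≤ Cb :=
  tsum_nonneg fun n => mul_nonneg (hcoef_nonneg _) (by positivity)

set_option maxHeartbeats 1000000 in
lemma tail_bound {x : ℝ} (hx0 : 0 < x) (hx2 : x ≤ 1/2) :
    hcoef 0 ≤ (∑' n, hcoef n * x ^ n) ∧
      (∑' n, hcoef n * x ^ n) ≤ hcoef 0 + Cb * x := by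
  have hx : |x| < 1 := abs_lt.2 ⟨by linarith, by linarith⟩
  have hs := summable_hcoef hx
  have hs1 : Summable fun n : ℕ => hcoef (n+1) * x ^ (n+1) := (summable_nat_add_iff 1).2 hs
  have hsplit : ∑' n, hcoef n * x ^ n = hcoef 0 + ∑' n, hcoef (n+1) * x ^ (n+1) := by
    rw [Summable.tsum_eq_zero_add hs, pow_zero, mul_one]
  rw [hsplit]
  constructor
  · have hnn : ∀ n : ℕ, 0 ≤ hcoef (n+1) * x ^ (n+1) := fun n =>
      mul_nonneg (hcoef_nonneg (n+1)) (pow_nonneg hx0.le (n+1))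
    have h2 : (0:ℝ) ≤ ∑' n, hcoef (n+1) * x ^ (n+1) := tsum_nonneg hnn
    linarith
  · apply add_le_add (le_refl _)
    have hle : ∀ n : ℕ, hcoef (n+1) * x ^ (n+1) ≤ (hcoef (n+1) * (1/2:ℝ)^n) * x := by
      intro n
      have h1 : x ^ (n+1) ≤ (1/2:ℝ)^n * x := by
        rw [pow_succ]
        apply mul_le_mul_of_nonneg_right (pow_le_pow_left₀ hx0.le hx2 n) hx0.le
      calc hcoef (n+1) * x ^ (n+1) ≤ hcoef (n+1) * ((1/2:ℝ)^n * x) :=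
            mul_le_mul_of_nonneg_left h1 (hcoef_nonneg _)
        _ = (hcoef (n+1) * (1/2:ℝ)^n) * x := by ring
    calc ∑' n, hcoef (n+1) * x ^ (n+1) ≤ ∑' n, (hcoef (n+1) * (1/2:ℝ)^n) * x :=
          Summable.tsum_le_tsum hle hs1 (summable_hcoef_shift.mul_right x)
      _ = Cb * x := by rw [tsum_mul_right]; rfl

lemma part2 : Tendsto (fun x : ℝ => (E x ^ 2 - (1 - x) * K x ^ 2) / x ^ 2)
    (nhdsWithin 0 (Ioo 0 1)) (nhds (π ^ 2 / 32)) := by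
  have hev : ∀ᶠ x in nhdsWithin (0:ℝ) (Ioo 0 1),
      (E x ^ 2 - (1 - x) * K x ^ 2) / x ^ 2 ∈ Icc (π^2/32) (π^2/32 + Cb * x) := by
    have h1 : ∀ᶠ x in nhdsWithin (0:ℝ) (Ioo 0 1), x ∈ Ioo (0:ℝ) 1 := self_mem_nhdsWithin
    have h2 : ∀ᶠ x in nhdsWithin (0:ℝ) (Ioo 0 1), x < 1/2 :=
      nhdsWithin_le_nhds (eventually_lt_nhds (by norm_num))
    filter_upwards [h1, h2] with x hx hx2
    rw [fval_eq hx.1 hx.2]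
    have := tail_bound hx.1 hx2.le
    rw [hcoef_zero] at this
    constructor
    · linarith [this.1]
    · linarith [this.2]
  have hlow : Tendsto (fun _ : ℝ => (π^2/32 : ℝ)) (nhdsWithin (0:ℝ) (Ioo 0 1))
      (nhds (π^2/32)) := tendsto_const_nhds
  have hup : Tendsto (fun x : ℝ => π^2/32 + Cb * x) (nhdsWithin (0:ℝ) (Ioo 0 1))
      (nhds (π^2/32)) := by
    have : Tendsto (fun x : ℝ => π^2/32 + Cb * x) (nhds (0:ℝ)) (nhds (π^2/32 + Cb * 0)) := by
      apply Continuous.tendsto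
      fun_prop
    rw [mul_zero, add_zero] at this
    exact this.mono_left nhdsWithin_le_nhds
  apply tendsto_of_tendsto_of_tendsto_of_le_of_le' hlow hup
  · filter_upwards [hev] with x hx using hx.1
  · filter_upwards [hev] with x hx using hx.2

/-! ### Main part 3: limit at 1 -/

lemma E_tendsto : Tendsto E (nhdsWithin 1 (Ioo 0 1)) (nhds 1) := by
  have hpi : (0:ℝ) < π/2 := by positivity
  have key : Tendsto (fun x : ℝ => ∫ t in (0:ℝ)..(π/2), (1 - x * Real.sin t ^ 2) ^ ((1/2):ℝ))
      (nhdsWithin 1 (Ioo 0 1)) (nhds (∫ t in (0:ℝ)..(π/2), Real.cos t)) := by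
    apply intervalIntegral.tendsto_integral_filter_of_dominated_convergence 1
    · apply Eventually.of_forall
      intro x
      apply Continuous.aestronglyMeasurable
      apply Continuous.rpow_const
      · fun_prop
      · intro t; right; norm_num
    · have h1 : ∀ᶠ x in nhdsWithin (1:ℝ) (Ioo 0 1), x ∈ Ioo (0:ℝ) 1 := self_mem_nhdsWithin
      filter_upwards [h1] with x hx
      apply MeasureTheory.ae_of_all
      intro t _
      have hs := Real.sin_sq_le_one t
      have hb0 : 0 ≤ 1 - x * Real.sin t ^ 2 := by nlinarith [hx.2, sq_nonneg (Real.sin t)]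
      have hb1 : 1 - x * Real.sin t ^ 2 ≤ 1 := by nlinarith [hx.1, sq_nonneg (Real.sin t)]
      rw [Real.norm_eq_abs, abs_of_nonneg (Real.rpow_nonneg hb0 _)]
      calc (1 - x * Real.sin t ^ 2) ^ ((1/2):ℝ) ≤ 1 := Real.rpow_le_one hb0 hb1 (by norm_num)
        _ = (1:ℝ → ℝ) t := rfl
    · exact intervalIntegrable_const
    · apply MeasureTheory.ae_of_all
      intro t ht
      rw [Set.uIoc_of_le hpi.le] at ht
      have hcos : 0 ≤ Real.cos t := Real.cos_nonneg_of_mem_Icc ⟨by linarith [ht.1], ht.2⟩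
      have hbase : Tendsto (fun x : ℝ => 1 - x * Real.sin t ^ 2)
          (nhdsWithin 1 (Ioo 0 1)) (nhds (1 - 1 * Real.sin t ^ 2)) := by
        apply Tendsto.mono_left _ nhdsWithin_le_nhds
        exact (Continuous.tendsto (by fun_prop) 1)
      have hct : ContinuousAt (fun z : ℝ => z ^ ((1/2):ℝ)) (1 - 1 * Real.sin t ^ 2) := by
        apply Real.continuousAt_rpow_const
        right; norm_num
      have := hct.tendsto.comp hbase
      convert this using 1
      · rfl
      rw [show (1:ℝ) - 1 * Real.sin t ^ 2 = Real.cos t ^ 2 by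
        linear_combination (-1 : ℝ) * Real.sin_sq_add_cos_sq t]
      rw [← Real.sqrt_eq_rpow, Real.sqrt_sq hcos]
  have : (∫ t in (0:ℝ)..(π/2), Real.cos t) = 1 := by
    rw [integral_cos]; norm_num
  rw [this] at key
  exact key

lemma K_nonneg {x : ℝ} (h0 : 0 ≤ x) (h1 : x < 1) : 0 ≤ K x := by
  rw [K_eq h0 h1]
  have hpi : (0:ℝ) < π/2 := by positivity
  apply mul_nonneg hpi.le
  apply tsum_nonneg
  intro n
  rw [KC]
  have := (c_pos n).le
  positivity

lemma K_bound {x : ℝ} (hhalf : 1/2 ≤ x) (h1 : x < 1) :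
    K x ≤ 4 * π * (1-x) ^ (-(1/4) : ℝ) := by
  have h0 : (0:ℝ) < x := by linarith
  have hx : |x| < 1 := abs_lt.2 ⟨by linarith, h1⟩
  have h1x : (0:ℝ) < 1 - x := by linarith
  -- step 1: series compare with log series
  have hlog : HasSum (fun n : ℕ => x ^ n / ((n:ℝ)+1)) (x⁻¹ * (-Real.log (1-x))) := by
    have h := (Real.hasSum_pow_div_log_of_abs_lt_one hx).mul_left x⁻¹
    have hfun : (fun n : ℕ => x⁻¹ * (x^(n+1)/((n:ℝ)+1))) = fun n : ℕ => x^n/((n:ℝ)+1) := by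
      funext n
      rw [pow_succ']
      field_simp
    rwa [hfun] at h
  -- step 2: K x ≤ (π/2) * x⁻¹ * (-log(1-x))
  have hcomp : ∀ n : ℕ, KC n * x ^ n ≤ x ^ n / ((n:ℝ)+1) := by
    intro n
    have hc1 : KC n ≤ 1/((n:ℝ)+1) := by
      have h2 := c_sq_bound n
      have hn1 : (0:ℝ) < (n:ℝ)+1 := by positivity
      have h2n : (0:ℝ) < 2*(n:ℝ)+1 := by positivity
      rw [KC, ← sq]
      rw [le_div_iff₀ hn1]
      nlinarith [sq_nonneg (c n)]
    have hxn : (0:ℝ) ≤ x ^ n := by positivity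
    calc KC n * x ^ n ≤ (1/((n:ℝ)+1)) * x ^ n :=
          mul_le_mul_of_nonneg_right hc1 hxn
      _ = x ^ n / ((n:ℝ)+1) := by ring
  have hSK : (∑' n, KC n * x ^ n) ≤ x⁻¹ * (-Real.log (1-x)) := by
    rw [← hlog.tsum_eq]
    exact Summable.tsum_le_tsum hcomp (summable_SK hx) hlog.summable
  have hKle : K x ≤ (π/2) * (x⁻¹ * (-Real.log (1-x))) := by
    rw [K_eq h0.le h1]
    apply mul_le_mul_of_nonneg_left hSK (by positivity)
  -- step 3: log bound
  have hlogpos : 0 ≤ -Real.log (1-x) := by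
    have hl : Real.log (1-x) ≤ 0 := Real.log_nonpos (by linarith) (by linarith)
    linarith
  have hinv : x⁻¹ ≤ 2 := by
    rw [← one_div]
    calc 1/x ≤ 1/(1/2) := one_div_le_one_div_of_le (by norm_num) hhalf
      _ = 2 := by norm_num
  have hlogbound : -Real.log (1-x) ≤ 4 * (1-x) ^ (-(1/4) : ℝ) := by
    have h4 : -Real.log (1-x) = 4 * Real.log ((1-x) ^ (-(1/4):ℝ)) := by
      rw [Real.log_rpow h1x]
      ring
    rw [h4]
    have hz : (0:ℝ) < (1-x) ^ (-(1/4):ℝ) := Real.rpow_pos_of_pos h1x _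
    have := Real.log_le_sub_one_of_pos hz
    nlinarith
  calc K x ≤ (π/2) * (x⁻¹ * (-Real.log (1-x))) := hKle
    _ ≤ (π/2) * (2 * (4 * (1-x) ^ (-(1/4) : ℝ))) := by
        apply mul_le_mul_of_nonneg_left _ (by positivity)
        have hr : (0:ℝ) ≤ (1-x) ^ (-(1/4):ℝ) := (Real.rpow_pos_of_pos h1x _).le
        calc x⁻¹ * (-Real.log (1-x)) ≤ 2 * (-Real.log (1-x)) :=
              mul_le_mul_of_nonneg_right hinv hlogpos
          _ ≤ 2 * (4 * (1-x) ^ (-(1/4) : ℝ)) := by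
              apply mul_le_mul_of_nonneg_left hlogbound (by norm_num)
    _ = 4 * π * (1-x) ^ (-(1/4) : ℝ) := by ring

lemma oneminus_K_bound {x : ℝ} (hhalf : 1/2 ≤ x) (h1 : x < 1) :
    (1-x) * K x ^ 2 ≤ 16 * π^2 * Real.sqrt (1-x) := by
  have h0 : (0:ℝ) < x := by linarith
  have h1x : (0:ℝ) < 1 - x := by linarith
  have hK0 := K_nonneg h0.le h1
  have hKb := K_bound hhalf h1
  have hsq : K x ^ 2 ≤ (4 * π * (1-x) ^ (-(1/4) : ℝ)) ^ 2 :=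
    pow_le_pow_left₀ hK0 hKb 2
  have hr2 : ((1-x) ^ (-(1/4):ℝ)) ^ 2 = (1-x) ^ (-(1/2):ℝ) := by
    rw [← Real.rpow_natCast ((1-x) ^ (-(1/4):ℝ)) 2, ← Real.rpow_mul h1x.le]
    norm_num
  have hfin : (1-x) * (1-x) ^ (-(1/2):ℝ) = Real.sqrt (1-x) := by
    nth_rewrite 1 [← Real.rpow_one (1-x)]
    rw [← Real.rpow_add h1x, Real.sqrt_eq_rpow]
    norm_num
  calc (1-x) * K x ^ 2 ≤ (1-x) * (4 * π * (1-x) ^ (-(1/4) : ℝ)) ^ 2 :=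
        mul_le_mul_of_nonneg_left hsq h1x.le
    _ = 16 * π^2 * ((1-x) * ((1-x) ^ (-(1/4):ℝ))^2) := by ring
    _ = 16 * π^2 * Real.sqrt (1-x) := by rw [hr2, hfin]

lemma K2_tendsto : Tendsto (fun x : ℝ => (1-x) * K x ^ 2)
    (nhdsWithin 1 (Ioo 0 1)) (nhds 0) := by
  have hup : Tendsto (fun x : ℝ => 16 * π^2 * Real.sqrt (1-x))
      (nhdsWithin 1 (Ioo 0 1)) (nhds 0) := by
    have : Tendsto (fun x : ℝ => 16 * π^2 * Real.sqrt (1-x)) (nhds 1)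
        (nhds (16 * π^2 * Real.sqrt (1-1))) := by
      apply Continuous.tendsto
      fun_prop
    rw [sub_self, Real.sqrt_zero, mul_zero] at this
    exact this.mono_left nhdsWithin_le_nhds
  apply tendsto_of_tendsto_of_tendsto_of_le_of_le' tendsto_const_nhds hup
  · have h1 : ∀ᶠ x in nhdsWithin (1:ℝ) (Ioo 0 1), x ∈ Ioo (0:ℝ) 1 := self_mem_nhdsWithin
    filter_upwards [h1] with x hx
    have := K_nonneg hx.1.le hx.2
    nlinarith [hx.2]
  · have h1 : ∀ᶠ x in nhdsWithin (1:ℝ) (Ioo 0 1), x ∈ Ioo (0:ℝ) 1 := self_mem_nhdsWithin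
    have h2 : ∀ᶠ x in nhdsWithin (1:ℝ) (Ioo 0 1), (1/2:ℝ) < x :=
      nhdsWithin_le_nhds (eventually_gt_nhds (by norm_num))
    filter_upwards [h1, h2] with x hx hx2
    exact oneminus_K_bound hx2.le hx.2

lemma part3 : Tendsto (fun x : ℝ => (E x ^ 2 - (1 - x) * K x ^ 2) / x ^ 2)
    (nhdsWithin 1 (Ioo 0 1)) (nhds 1) := by
  have hE := E_tendsto
  have hnum : Tendsto (fun x : ℝ => E x ^ 2 - (1 - x) * K x ^ 2)
      (nhdsWithin 1 (Ioo 0 1)) (nhds 1) := by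
    have hE2 : Tendsto (fun x : ℝ => E x ^ 2) (nhdsWithin 1 (Ioo 0 1)) (nhds 1) := by
      have := hE.mul hE
      rw [mul_one] at this
      apply this.congr
      intro x
      rw [sq]
    have := hE2.sub K2_tendsto
    rw [sub_zero] at this
    exact this
  have hden : Tendsto (fun x : ℝ => x ^ 2) (nhdsWithin 1 (Ioo 0 1)) (nhds 1) := by
    have : Tendsto (fun x : ℝ => x ^ 2) (nhds (1:ℝ)) (nhds ((1:ℝ)^2)) := by
      apply Continuous.tendsto
      fun_prop
    rw [one_pow] at this
    exact this.mono_left nhdsWithin_le_nhds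
  have := hnum.div hden one_ne_zero
  rw [div_one] at this
  exact this

end EKaux


theorem stmt1 :
    StrictMonoOn (fun x : ℝ => (E x ^ 2 - (1 - x) * K x ^ 2) / x ^ 2) (Ioo 0 1) ∧
    Tendsto (fun x : ℝ => (E x ^ 2 - (1 - x) * K x ^ 2) / x ^ 2)
      (nhdsWithin 0 (Ioo 0 1)) (nhds (π ^ 2 / 32)) ∧
    Tendsto (fun x : ℝ => (E x ^ 2 - (1 - x) * K x ^ 2) / x ^ 2)
      (nhdsWithin 1 (Ioo 0 1)) (nhds 1) :=
  ⟨EKaux.part1, EKaux.part2, EKaux.part3⟩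
end

section
/- The function x ↦ (2-x)·K(x) - 2·E(x) is strictly increasing on (0,1), tends to 0 as x → 0⁺, and tends to +∞ as x → 1⁻. -/
open Real Set Filter

-- base positivity
lemma base_pos {x : ℝ} (hx1 : x < 1) (t : ℝ) : 0 < 1 - x * Real.sin t ^ 2 := by
  rcases le_or_gt x 0 with h | h
  · nlinarith [sq_nonneg (Real.sin t)]
  · nlinarith [Real.sin_sq_le_one t, sq_nonneg (Real.sin t)]

noncomputable def g (x t : ℝ) : ℝ :=
  x * (2 * Real.sin t ^ 2 - 1) / Real.sqrt (1 - x * Real.sin t ^ 2)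

lemma cont_g {x : ℝ} (hx1 : x < 1) : Continuous (g x) := by
  apply Continuous.div
  · continuity
  · continuity
  · intro t
    exact (Real.sqrt_pos.2 (base_pos hx1 t)).ne'

-- pointwise identity
lemma point_id {x : ℝ} (hx1 : x < 1) (t : ℝ) :
    (2 - x) * (1 - x * Real.sin t ^ 2) ^ (-(1/2) : ℝ)
      - 2 * (1 - x * Real.sin t ^ 2) ^ ((1/2) : ℝ) = g x t := by
  have hu := base_pos hx1 t
  set u := 1 - x * Real.sin t ^ 2 with hudef
  have h1 : u ^ ((1/2) : ℝ) = Real.sqrt u := (Real.sqrt_eq_rpow u).symm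
  have h2 : u ^ (-(1/2) : ℝ) = (Real.sqrt u)⁻¹ := by
    rw [Real.rpow_neg hu.le, h1]
  have hs : (0:ℝ) < Real.sqrt u := Real.sqrt_pos.2 hu
  have hsq : Real.sqrt u * Real.sqrt u = u := Real.mul_self_sqrt hu.le
  rw [h1, h2, g, ← hudef]
  field_simp
  nlinarith [hsq, hudef]

lemma key_id {z a b : ℝ} (hz0 : 0 < z) (hz1 : z < 1) (hb : 0 ≤ b) (hba : b ≤ a) (ha : a ≤ 1) :
    z / Real.sqrt (1 - z*a) - z / Real.sqrt (1 - z*b)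
      = z^2 * (a - b) / (Real.sqrt (1 - z*a) * Real.sqrt (1 - z*b)
          * (Real.sqrt (1 - z*a) + Real.sqrt (1 - z*b))) := by
  have hA0 : (0:ℝ) < 1 - z*a := by nlinarith
  have hB0 : (0:ℝ) < 1 - z*b := by nlinarith
  set A := Real.sqrt (1 - z*a) with hAd
  set B := Real.sqrt (1 - z*b) with hBd
  have hA : 0 < A := Real.sqrt_pos.2 hA0
  have hB : 0 < B := Real.sqrt_pos.2 hB0
  have hA2 : A * A = 1 - z*a := Real.mul_self_sqrt hA0.le
  have hB2 : B * B = 1 - z*b := Real.mul_self_sqrt hB0.le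
  have hAB : 0 < A + B := by linarith
  rw [div_sub_div _ _ hA.ne' hB.ne', div_eq_div_iff (mul_pos hA hB).ne' (mul_pos (mul_pos hA hB) hAB).ne']
  linear_combination z*A*B*(hB2 - hA2)

lemma psi_mono {x y a b : ℝ} (hx : 0 < x) (hxy : x < y) (hy : y < 1)
    (hb : 0 ≤ b) (hba : b < a) (ha : a ≤ 1) :
    y / Real.sqrt (1 - y*b) - x / Real.sqrt (1 - x*b)
      < y / Real.sqrt (1 - y*a) - x / Real.sqrt (1 - x*a) := by
  have hx1 : x < 1 := hxy.trans hy
  have hy0 : 0 < y := hx.trans hxy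
  have ha0 : 0 < a := lt_of_le_of_lt hb hba
  have e1 := key_id hy0 hy hb hba.le ha
  have e2 := key_id hx hx1 hb hba.le ha
  have goal : x^2 * (a-b) / (Real.sqrt (1 - x*a) * Real.sqrt (1 - x*b)
          * (Real.sqrt (1 - x*a) + Real.sqrt (1 - x*b)))
      < y^2 * (a-b) / (Real.sqrt (1 - y*a) * Real.sqrt (1 - y*b)
          * (Real.sqrt (1 - y*a) + Real.sqrt (1 - y*b))) := by
    have hAy0 : (0:ℝ) < 1 - y*a := by nlinarith
    have hBy0 : (0:ℝ) < 1 - y*b := by nlinarith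
    have hAy : 0 < Real.sqrt (1 - y*a) := Real.sqrt_pos.2 hAy0
    have hBy : 0 < Real.sqrt (1 - y*b) := Real.sqrt_pos.2 hBy0
    have hAxy : Real.sqrt (1 - y*a) < Real.sqrt (1 - x*a) :=
      Real.sqrt_lt_sqrt hAy0.le (by nlinarith)
    have hBxy : Real.sqrt (1 - y*b) ≤ Real.sqrt (1 - x*b) :=
      Real.sqrt_le_sqrt (by nlinarith)
    have hAx : 0 < Real.sqrt (1 - x*a) := lt_trans hAy hAxy
    have hBx : 0 < Real.sqrt (1 - x*b) := lt_of_lt_of_le hBy hBxy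
    apply div_lt_div₀
    · have : x^2 < y^2 := by nlinarith
      exact mul_lt_mul_of_pos_right this (by linarith)
    · gcongr <;> first | exact hAxy.le | exact hBxy | positivity
    · exact mul_nonneg (sq_nonneg y) (by linarith)
    · exact mul_pos (mul_pos hAy hBy) (by linarith)
  linarith [e1, e2, goal]

lemma cont_rpow {x r : ℝ} (hx1 : x < 1) :
    Continuous (fun t => (1 - x * Real.sin t ^ 2) ^ (r : ℝ)) := by
  apply Continuous.rpow_const (by continuity)
  intro t
  exact Or.inl (base_pos hx1 t).ne'

lemma repr_f {x : ℝ} (hx1 : x < 1) :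
    (2 - x) * K x - 2 * E x = ∫ t in (0:ℝ)..(π/2), g x t := by
  rw [K, E, ← intervalIntegral.integral_const_mul, ← intervalIntegral.integral_const_mul,
    ← intervalIntegral.integral_sub
      (((cont_rpow (r := -(1/2)) hx1).intervalIntegrable _ _).const_mul _)
      (((cont_rpow (r := (1/2)) hx1).intervalIntegrable _ _).const_mul _)]
  exact intervalIntegral.integral_congr (fun t _ => point_id hx1 t)

lemma sum_pos {x y : ℝ} (hx : 0 < x) (hxy : x < y) (hy : y < 1)
    {t : ℝ} (ht : t ∈ Ioo 0 (π/4)) :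
    0 < (g y t - g x t) + (g y (π/2 - t) - g x (π/2 - t)) := by
  obtain ⟨ht0, ht4⟩ := ht
  have hs := Real.sin_nonneg_of_nonneg_of_le_pi ht0.le
    (by nlinarith [Real.pi_pos] : t ≤ π)
  set s := Real.sin t ^ 2 with hsd
  have hc : Real.cos t ^ 2 = 1 - s := by
    have := Real.sin_sq_add_cos_sq t
    linarith
  -- s < 1/2 on (0, π/4)
  have hslt : s < 1/2 := by
    have h1 : Real.sin t < Real.sin (π/4) := by
      apply Real.sin_lt_sin_of_lt_of_le_pi_div_two (by linarith [Real.pi_pos]) _ ht4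
      linarith [Real.pi_pos]
    rw [Real.sin_pi_div_four] at h1
    have h2 : s < (Real.sqrt 2 / 2)^2 := by
      rw [hsd]
      exact pow_lt_pow_left₀ h1 hs (by norm_num)
    have h3 : (Real.sqrt 2 / 2)^2 = 1/2 := by
      rw [div_pow, Real.sq_sqrt] <;> norm_num
    linarith
  have hs0 : 0 ≤ s := sq_nonneg _
  have hs1 : (1:ℝ) - s ≤ 1 := by linarith
  have hkey := psi_mono hx hxy hy hs0 (show s < 1 - s by linarith) hs1
  have e : (g y t - g x t) + (g y (π/2 - t) - g x (π/2 - t))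
      = (1 - 2*s) * ((y / Real.sqrt (1 - y*(1-s)) - x / Real.sqrt (1 - x*(1-s)))
          - (y / Real.sqrt (1 - y*s) - x / Real.sqrt (1 - x*s))) := by
    simp only [g, Real.sin_pi_div_two_sub, hc, ← hsd]
    ring
  rw [e]
  have h2s : 0 < 1 - 2*s := by linarith
  exact mul_pos h2s (by linarith)

lemma mono_main : StrictMonoOn (fun x : ℝ => (2 - x) * K x - 2 * E x) (Ioo 0 1) := by
  intro x hx y hy hxy
  simp only
  have hgx := cont_g hx.2
  have hgy := cont_g hy.2
  have hcont : Continuous (fun t => g y t - g x t) := hgy.sub hgx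
  have hcont' : Continuous (fun t => g y (π/2 - t) - g x (π/2 - t)) :=
    hcont.comp (continuous_const.sub continuous_id)
  suffices h : 0 < ((2 - y) * K y - 2 * E y) - ((2 - x) * K x - 2 * E x) by linarith
  rw [repr_f hy.2, repr_f hx.2,
    ← intervalIntegral.integral_sub (hgy.intervalIntegrable _ _) (hgx.intervalIntegrable _ _)]
  have split : (∫ t in (0:ℝ)..(π/2), (g y t - g x t))
      = (∫ t in (0:ℝ)..(π/4), (g y t - g x t)) + ∫ t in (π/4:ℝ)..(π/2), (g y t - g x t) :=
    (intervalIntegral.integral_add_adjacent_intervals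
      (hcont.intervalIntegrable _ _) (hcont.intervalIntegrable _ _)).symm
  have hrefl : (∫ t in (π/4:ℝ)..(π/2), (g y t - g x t))
      = ∫ t in (0:ℝ)..(π/4), (g y (π/2 - t) - g x (π/2 - t)) := by
    rw [intervalIntegral.integral_comp_sub_left (fun t => g y t - g x t) (π/2),
      show π/2 - π/4 = π/4 by ring, sub_zero]
  rw [split, hrefl,
    ← intervalIntegral.integral_add (hcont.intervalIntegrable _ _) (hcont'.intervalIntegrable _ _)]
  apply intervalIntegral.intervalIntegral_pos_of_pos_on
    ((hcont.add hcont').intervalIntegrable _ _)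
  · exact fun t ht => sum_pos hx.1 hxy hy.2 ht
  · linarith [Real.pi_pos]

lemma lim0 : Tendsto (fun x : ℝ => (2 - x) * K x - 2 * E x)
    (nhdsWithin 0 (Ioo 0 1)) (nhds 0) := by
  apply squeeze_zero_norm' (a := fun x : ℝ => x / Real.sqrt (1-x) * (π/2))
  · filter_upwards [self_mem_nhdsWithin] with x hx
    rw [repr_f hx.2]
    have hb : ∀ t ∈ Set.uIoc (0:ℝ) (π/2), ‖g x t‖ ≤ x / Real.sqrt (1-x) := by
      intro t _
      have hs0 : (0:ℝ) ≤ Real.sin t ^ 2 := sq_nonneg _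
      have hs1 : Real.sin t ^ 2 ≤ 1 := Real.sin_sq_le_one t
      have h1x : (0:ℝ) < 1 - x := by linarith [hx.2]
      have hden : Real.sqrt (1-x) ≤ Real.sqrt (1 - x * Real.sin t ^ 2) :=
        Real.sqrt_le_sqrt (by nlinarith [hx.1])
      have hdpos : 0 < Real.sqrt (1-x) := Real.sqrt_pos.2 h1x
      rw [g, norm_div, Real.norm_eq_abs, Real.norm_eq_abs,
        abs_of_nonneg (Real.sqrt_nonneg _)]
      apply div_le_div₀ hx.1.le _ hdpos hden
      rw [abs_mul, abs_of_pos hx.1]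
      have h2 : |2 * Real.sin t ^ 2 - 1| ≤ 1 := by
        rw [abs_le]; constructor <;> nlinarith
      nlinarith [hx.1]
    calc ‖∫ t in (0:ℝ)..(π/2), g x t‖
        ≤ x / Real.sqrt (1-x) * |π/2 - 0| :=
          intervalIntegral.norm_integral_le_of_norm_le_const hb
      _ = x / Real.sqrt (1-x) * (π/2) := by
          rw [sub_zero, abs_of_pos (by positivity : (0:ℝ) < π/2)]
  · have hc : ContinuousAt (fun x : ℝ => x / Real.sqrt (1-x) * (π/2)) 0 := by
      apply ContinuousAt.mul _ continuousAt_const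
      apply ContinuousAt.div continuousAt_id
        ((Real.continuous_sqrt.comp (continuous_const.sub continuous_id)).continuousAt)
      simp
    have h0 := hc.tendsto
    simp only [sub_zero, Real.sqrt_one, div_one, zero_div, zero_mul] at h0
    exact h0.mono_left nhdsWithin_le_nhds

lemma E_le {x : ℝ} (hx0 : 0 < x) (hx1 : x < 1) : E x ≤ π / 2 := by
  have h : ∀ t ∈ Icc (0:ℝ) (π/2), (1 - x * Real.sin t ^ 2) ^ ((1/2) : ℝ) ≤ 1 := by
    intro t _
    apply Real.rpow_le_one (base_pos hx1 t).le _ (by norm_num)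
    nlinarith [sq_nonneg (Real.sin t)]
  calc E x ≤ ∫ _t in (0:ℝ)..(π/2), (1:ℝ) := by
        apply intervalIntegral.integral_mono_on (by positivity)
          ((cont_rpow hx1).intervalIntegrable _ _) intervalIntegrable_const h
    _ = π/2 := by simp
  
lemma K_nonneg {x : ℝ} (hx1 : x < 1) : 0 ≤ K x := by
  apply intervalIntegral.integral_nonneg (by positivity)
  intro t _
  exact Real.rpow_nonneg (base_pos hx1 t).le _

lemma K_lb {x : ℝ} (hx0 : 0 < x) (hx1 : x < 1) :
    Real.log ((Real.sqrt (1-x) + π/2) / Real.sqrt (1-x)) ≤ K x := by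
  have h1x : (0:ℝ) < 1 - x := by linarith
  have hse : (0:ℝ) < Real.sqrt (1-x) := Real.sqrt_pos.2 h1x
  -- pointwise bound
  have hpt : ∀ t ∈ Icc (0:ℝ) (π/2),
      (Real.sqrt (1-x) + (π/2 - t))⁻¹ ≤ (1 - x * Real.sin t ^ 2) ^ (-(1/2) : ℝ) := by
    intro t ht
    have hbp := base_pos hx1 t
    have hrw : (1 - x * Real.sin t ^ 2) ^ (-(1/2) : ℝ)
        = (Real.sqrt (1 - x * Real.sin t ^ 2))⁻¹ := by
      rw [Real.rpow_neg hbp.le, ← Real.sqrt_eq_rpow]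
    rw [hrw]
    have hcos : Real.cos t ≤ π/2 - t := by
      rw [← Real.sin_pi_div_two_sub]
      exact Real.sin_le (by linarith [ht.2])
    have hcos0 : 0 ≤ Real.cos t := Real.cos_nonneg_of_mem_Icc ⟨by linarith [ht.1, Real.pi_pos], ht.2⟩
    have hc2 : Real.cos t ^ 2 ≤ (π/2 - t)^2 := by nlinarith
    have hsc : Real.sin t ^ 2 = 1 - Real.cos t ^ 2 := by
      nlinarith [Real.sin_sq_add_cos_sq t]
    have hle : Real.sqrt (1 - x * Real.sin t ^ 2) ≤ Real.sqrt (1-x) + (π/2 - t) := by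
      have h1 : 1 - x * Real.sin t ^ 2 ≤ (Real.sqrt (1-x) + (π/2 - t))^2 := by
        have hsq : Real.sqrt (1-x) ^ 2 = 1 - x := Real.sq_sqrt h1x.le
        have ht2 : 0 ≤ π/2 - t := by linarith [ht.2]
        nlinarith [hc2, hsc, hcos0, sq_nonneg (Real.cos t)]
      calc Real.sqrt (1 - x * Real.sin t ^ 2)
          ≤ Real.sqrt ((Real.sqrt (1-x) + (π/2 - t))^2) := Real.sqrt_le_sqrt h1
        _ = Real.sqrt (1-x) + (π/2 - t) := Real.sqrt_sq (by nlinarith [hse, ht.2])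
    exact inv_anti₀ (Real.sqrt_pos.2 hbp) hle
  -- continuity of the lower integrand on the interval
  have hcontOn : ContinuousOn (fun t => (Real.sqrt (1-x) + (π/2 - t))⁻¹)
      (uIcc (0:ℝ) (π/2)) := by
    apply ContinuousOn.inv₀ (by fun_prop)
    intro t ht
    rw [uIcc_of_le (by positivity : (0:ℝ) ≤ π/2)] at ht
    have h2 := ht.2
    have hp : 0 < Real.sqrt (1-x) + (π/2 - t) := by linarith
    exact hp.ne'
  have hint : IntervalIntegrable (fun t => (Real.sqrt (1-x) + (π/2 - t))⁻¹)
      MeasureTheory.volume 0 (π/2) := hcontOn.intervalIntegrable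
  -- value of the lower integral
  have hval : (∫ t in (0:ℝ)..(π/2), (Real.sqrt (1-x) + (π/2 - t))⁻¹)
      = Real.log ((Real.sqrt (1-x) + π/2) / Real.sqrt (1-x)) := by
    have e1 : (∫ t in (0:ℝ)..(π/2), (Real.sqrt (1-x) + (π/2 - t))⁻¹)
        = ∫ u in (0:ℝ)..(π/2), (Real.sqrt (1-x) + u)⁻¹ := by
      rw [intervalIntegral.integral_comp_sub_left (fun u => (Real.sqrt (1-x) + u)⁻¹) (π/2)]
      norm_num
    rw [e1]
    have e2 : (∫ u in (0:ℝ)..(π/2), (Real.sqrt (1-x) + u)⁻¹)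
        = ∫ v in (Real.sqrt (1-x))..(Real.sqrt (1-x) + π/2), v⁻¹ := by
      have := intervalIntegral.integral_comp_add_left (a := (0:ℝ)) (b := π/2)
        (fun v => v⁻¹) (Real.sqrt (1-x))
      simpa using this
    rw [e2, integral_inv_of_pos hse (by positivity)]
  calc Real.log ((Real.sqrt (1-x) + π/2) / Real.sqrt (1-x))
      = ∫ t in (0:ℝ)..(π/2), (Real.sqrt (1-x) + (π/2 - t))⁻¹ := hval.symm
    _ ≤ K x := intervalIntegral.integral_mono_on (by positivity) hint
        ((cont_rpow hx1).intervalIntegrable _ _) hpt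

lemma lim1 : Tendsto (fun x : ℝ => (2 - x) * K x - 2 * E x)
    (nhdsWithin 1 (Ioo 0 1)) atTop := by
  apply tendsto_atTop_mono'
    (f₁ := fun x : ℝ => Real.log ((Real.sqrt (1-x) + π/2) / Real.sqrt (1-x)) - π)
  · filter_upwards [self_mem_nhdsWithin] with x hx
    have h1 := K_lb hx.1 hx.2
    have h2 := E_le hx.1 hx.2
    have h3 := K_nonneg hx.2
    have h4 : K x ≤ (2 - x) * K x := by nlinarith [hx.2]
    linarith
  · -- the lower bound tends to atTop
    have hsq : Tendsto (fun x : ℝ => Real.sqrt (1-x)) (nhdsWithin 1 (Ioo 0 1))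
        (nhdsWithin 0 (Ioi 0)) := by
      apply tendsto_nhdsWithin_of_tendsto_nhds_of_eventually_within
      · have : Tendsto (fun x : ℝ => Real.sqrt (1-x)) (nhds 1) (nhds (Real.sqrt (1-1))) :=
          (Real.continuous_sqrt.comp (continuous_const.sub continuous_id)).continuousAt
        simpa using this.mono_left nhdsWithin_le_nhds
      · filter_upwards [self_mem_nhdsWithin] with x hx
        exact Real.sqrt_pos.2 (by linarith [hx.2])
    have hlog : Tendsto (fun u : ℝ => Real.log ((u + π/2) / u)) (nhdsWithin 0 (Ioi 0))
        atTop := by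
      apply Tendsto.congr'
        (f₁ := fun u : ℝ => Real.log (1 + (π/2) * u⁻¹))
      · filter_upwards [self_mem_nhdsWithin] with u hu
        rw [mem_Ioi] at hu
        congr 1
        field_simp
      · apply Real.tendsto_log_atTop.comp
        have h1 : Tendsto (fun u : ℝ => (π/2) * u⁻¹) (nhdsWithin 0 (Ioi 0)) atTop :=
          (tendsto_inv_nhdsGT_zero).const_mul_atTop (by positivity)
        exact tendsto_atTop_add_const_left _ 1 h1
    have := tendsto_atTop_add_const_right _ (-π) (hlog.comp hsq)
    simpa [Function.comp, sub_eq_add_neg] using this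

theorem stmt2 :
    StrictMonoOn (fun x : ℝ => (2 - x) * K x - 2 * E x) (Ioo 0 1) ∧
    Tendsto (fun x : ℝ => (2 - x) * K x - 2 * E x) (nhdsWithin 0 (Ioo 0 1)) (nhds 0) ∧
    Tendsto (fun x : ℝ => (2 - x) * K x - 2 * E x) (nhdsWithin 1 (Ioo 0 1)) atTop := by
  exact ⟨mono_main, lim0, lim1⟩
end

section
/- For p ∈ (0, 1/4), there exists a unique x_p ∈ (0,1) such that the function h_p(x) = (1-x)^p · K(x) is strictly increasing on (0, x_p) and strictly decreasing on (x_p, 1); moreover x_p is the unique zero in (0,1) of E(x) + ((1-2p)x - 1)·K(x). -/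
open Real Set Filter

open MeasureTheory intervalIntegral Metric

lemma u_lb {x : ℝ} (hx0 : 0 ≤ x) (t : ℝ) :
    1 - x ≤ 1 - x * Real.sin t ^ 2 := by
  nlinarith [Real.sin_sq_le_one t, sq_nonneg (Real.sin t)]

lemma u_pos {x : ℝ} (hx : x ∈ Ioo (0:ℝ) 1) (t : ℝ) : 0 < 1 - x * Real.sin t ^ 2 := by
  have := u_lb hx.1.le t
  have := hx.2
  linarith [hx.1]

lemma cont_u_rpow {x : ℝ} (hx : x ∈ Ioo (0:ℝ) 1) (a : ℝ) :
    Continuous fun t => (1 - x * Real.sin t ^ 2) ^ a := by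
  apply Continuous.rpow_const
  · continuity
  · intro t; exact Or.inl (ne_of_gt (u_pos hx t))

lemma intInt_u_rpow {x : ℝ} (hx : x ∈ Ioo (0:ℝ) 1) (a : ℝ) :
    IntervalIntegrable (fun t => (1 - x * Real.sin t ^ 2) ^ a) volume 0 (π/2) :=
  (cont_u_rpow hx a).intervalIntegrable _ _

lemma hasDerivAt_param (c : ℝ) (hc : c ≤ 1) {x : ℝ} (hx : x ∈ Ioo (0:ℝ) 1) :
    HasDerivAt (fun y => ∫ t in (0:ℝ)..(π/2), (1 - y * Real.sin t ^ 2) ^ c)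
      (∫ t in (0:ℝ)..(π/2), c * (1 - x * Real.sin t ^ 2) ^ (c - 1) * (-(Real.sin t ^ 2))) x := by
  obtain ⟨hx0, hx1⟩ := hx
  have hm : (0:ℝ) < (1 - x)/2 := by linarith
  have hball : ∀ y ∈ ball x ((1-x)/2), ∀ t : ℝ, (1 - x)/2 ≤ 1 - y * Real.sin t ^ 2 := by
    intro y hy t
    have hd : |y - x| < (1-x)/2 := by
      have := mem_ball_iff_norm.mp hy
      simpa [Real.norm_eq_abs] using this
    have h1 : y < x + (1-x)/2 := by
      have := abs_lt.mp hd
      linarith [this.2]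
    rcases le_or_gt y 0 with h | h
    · nlinarith [sq_nonneg (Real.sin t)]
    · nlinarith [Real.sin_sq_le_one t, sq_nonneg (Real.sin t)]
  have key := intervalIntegral.hasDerivAt_integral_of_dominated_loc_of_deriv_le
    (F := fun y t => (1 - y * Real.sin t ^ 2) ^ c)
    (F' := fun y t => c * (1 - y * Real.sin t ^ 2) ^ (c - 1) * (-(Real.sin t ^ 2)))
    (x₀ := x) (a := 0) (b := π/2) (μ := volume)
    (bound := fun _ => |c| * ((1 - x)/2) ^ (c - 1))
    (Metric.ball_mem_nhds x hm)
    (eventually_of_mem (Metric.ball_mem_nhds x hm) fun y hy =>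
      (Continuous.rpow_const (by continuity) fun t =>
        Or.inl (ne_of_gt (lt_of_lt_of_le hm (hball y hy t)))).aestronglyMeasurable)
    (intInt_u_rpow ⟨hx0, hx1⟩ c)
    (((continuous_const.mul (cont_u_rpow ⟨hx0, hx1⟩ (c-1))).mul
        ((Real.continuous_sin.pow 2).neg)).aestronglyMeasurable)
    (Eventually.of_forall ?_)
    intervalIntegrable_const
    (Eventually.of_forall ?_)
  · exact key.2
  · -- bound
    intro t _ y hy
    have hu : (1 - x)/2 ≤ 1 - y * Real.sin t ^ 2 := hball y hy t
    have hA : (1 - y * Real.sin t ^ 2) ^ (c-1) ≤ ((1-x)/2) ^ (c-1) :=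
      Real.rpow_le_rpow_of_nonpos hm hu (by linarith)
    have hA0 : (0:ℝ) ≤ (1 - y * Real.sin t ^ 2) ^ (c-1) :=
      Real.rpow_nonneg (by linarith) _
    have hs1 : Real.sin t ^ 2 ≤ 1 := Real.sin_sq_le_one t
    have hs0 : (0:ℝ) ≤ Real.sin t ^ 2 := sq_nonneg _
    rw [Real.norm_eq_abs, abs_mul, abs_mul, abs_of_nonneg hA0, abs_neg,
      abs_of_nonneg hs0]
    have h0c : (0:ℝ) ≤ |c| := abs_nonneg c
    nlinarith [mul_le_mul_of_nonneg_left hA h0c, mul_nonneg h0c hA0]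
  · -- differentiability
    intro t _ y hy
    have h1 : HasDerivAt (fun y : ℝ => 1 - y * Real.sin t ^ 2) (-(Real.sin t ^ 2)) y := by
      simpa using ((hasDerivAt_id y).mul_const (Real.sin t ^ 2)).const_sub 1
    have h2 := h1.rpow_const (p := c)
      (Or.inl (ne_of_gt (lt_of_lt_of_le hm (hball y hy t))))
    simpa [mul_comm, mul_assoc, mul_left_comm] using h2

lemma rpow_half_eq {u : ℝ} (hu : 0 < u) :
    u ^ ((1/2):ℝ) = u^2 * u ^ (-(3/2):ℝ) := by
  have h : ((1:ℝ)/2) = (2:ℝ) + (-(3/2)) := by norm_num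
  rw [h, Real.rpow_add hu]
  norm_num [Real.rpow_two]

lemma rpow_neg_half_eq {u : ℝ} (hu : 0 < u) :
    u ^ (-(1/2):ℝ) = u * u ^ (-(3/2):ℝ) := by
  have h : (-(1:ℝ)/2) = (1:ℝ) + (-(3/2)) := by norm_num
  rw [show (-(1/2):ℝ) = (1:ℝ) + (-(3/2)) by norm_num, Real.rpow_add hu, Real.rpow_one]

lemma ibp {x : ℝ} (hx : x ∈ Ioo (0:ℝ) 1) :
    (∫ t in (0:ℝ)..(π/2),
      ((1 - x * Real.sin t ^ 2) ^ ((1/2):ℝ)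
        - (1-x) * (1 - x * Real.sin t ^ 2) ^ (-(3/2):ℝ))) = 0 := by
  have hderiv : ∀ t ∈ uIcc (0:ℝ) (π/2),
      HasDerivAt (fun t => x * (Real.sin t * Real.cos t * (1 - x * Real.sin t ^ 2) ^ (-(1/2):ℝ)))
        ((1 - x * Real.sin t ^ 2) ^ ((1/2):ℝ)
          - (1-x) * (1 - x * Real.sin t ^ 2) ^ (-(3/2):ℝ)) t := by
    intro t _
    have hu := u_pos hx t
    have hs : HasDerivAt Real.sin (Real.cos t) t := Real.hasDerivAt_sin t
    have hc : HasDerivAt Real.cos (-Real.sin t) t := Real.hasDerivAt_cos t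
    have h1 : HasDerivAt (fun t : ℝ => 1 - x * Real.sin t ^ 2)
        (-(x * (2 * Real.sin t ^ 1 * Real.cos t))) t := by
      simpa using ((hs.pow 2).const_mul x).const_sub 1
    have h2 := h1.rpow_const (p := (-(1/2):ℝ)) (Or.inl hu.ne')
    have h3 := hs.mul hc
    have h4 := (h3.mul h2).const_mul x
    refine HasDerivAt.congr_deriv h4 (Eq.symm ?_)
    rw [Pi.mul_apply]
    have hcos : Real.cos t ^ 2 = 1 - Real.sin t ^ 2 := Real.cos_sq' t
    rw [rpow_half_eq hu, rpow_neg_half_eq hu,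
      show (-(1/2):ℝ) - 1 = -(3/2) by norm_num]
    set s := Real.sin t
    set c := Real.cos t
    set w := (1 - x * s ^ 2) ^ (-(3/2):ℝ)
    linear_combination (-(x * (1 - x * s^2) * w + x^2 * s^2 * w)) * hcos
  rw [intervalIntegral.integral_eq_sub_of_hasDerivAt hderiv
    (((cont_u_rpow hx (1/2)).sub
      (continuous_const.mul (cont_u_rpow hx (-(3/2))))).intervalIntegrable _ _)]
  simp

lemma int_u32 {x : ℝ} (hx : x ∈ Ioo (0:ℝ) 1) :
    (∫ t in (0:ℝ)..(π/2), (1 - x * Real.sin t ^ 2) ^ (-(3/2):ℝ)) = E x / (1-x) := by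
  have h := ibp hx
  rw [intervalIntegral.integral_sub (intInt_u_rpow hx (1/2))
    ((intInt_u_rpow hx (-(3/2))).const_mul (1-x)),
    intervalIntegral.integral_const_mul] at h
  have hx1 : (1:ℝ) - x ≠ 0 := by have := hx.2; intro h'; linarith
  rw [eq_div_iff hx1]
  have hE : E x = ∫ t in (0:ℝ)..(π/2), (1 - x * Real.sin t ^ 2) ^ ((1/2):ℝ) := rfl
  rw [hE]; linarith

lemma rpow_one_half_eq {u : ℝ} (hu : 0 < u) : u ^ ((1/2):ℝ) = u * u ^ (-(1/2):ℝ) := by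
  have h := Real.rpow_add hu 1 (-(1/2))
  rw [Real.rpow_one] at h
  rw [← h]
  norm_num

lemma hasDerivAt_K {x : ℝ} (hx : x ∈ Ioo (0:ℝ) 1) :
    HasDerivAt K ((E x - (1-x) * K x) / (2*x*(1-x))) x := by
  have h := hasDerivAt_param (-(1/2)) (by norm_num) hx
  have hfun : (fun y => ∫ t in (0:ℝ)..(π/2), (1 - y * Real.sin t ^ 2) ^ (-(1/2):ℝ)) = K := rfl
  rw [hfun] at h
  have hx0 : (0:ℝ) < x := hx.1
  have hx1 : x < 1 := hx.2
  have hptw : ∀ t : ℝ,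
      (-(1/2):ℝ) * (1 - x * Real.sin t ^ 2) ^ ((-(1/2):ℝ) - 1) * (-(Real.sin t ^ 2))
        = (1/(2*x)) * ((1 - x * Real.sin t ^ 2) ^ (-(3/2):ℝ)
            - (1 - x * Real.sin t ^ 2) ^ (-(1/2):ℝ)) := by
    intro t
    have hu := u_pos hx t
    rw [show ((-(1/2):ℝ) - 1) = -(3/2) by norm_num, rpow_neg_half_eq hu]
    field_simp
    ring
  have hval : (∫ t in (0:ℝ)..(π/2),
      (-(1/2):ℝ) * (1 - x * Real.sin t ^ 2) ^ ((-(1/2):ℝ) - 1) * (-(Real.sin t ^ 2)))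
      = (E x - (1-x) * K x) / (2*x*(1-x)) := by
    rw [intervalIntegral.integral_congr (g := fun t => (1/(2*x)) *
        ((1 - x * Real.sin t ^ 2) ^ (-(3/2):ℝ) - (1 - x * Real.sin t ^ 2) ^ (-(1/2):ℝ)))
      (fun t _ => hptw t)]
    rw [intervalIntegral.integral_const_mul,
      intervalIntegral.integral_sub (intInt_u_rpow hx (-(3/2))) (intInt_u_rpow hx (-(1/2))),
      int_u32 hx]
    have hK : (∫ t in (0:ℝ)..(π/2), (1 - x * Real.sin t ^ 2) ^ (-(1/2):ℝ)) = K x := rfl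
    rw [hK]
    have h1 : (1:ℝ) - x ≠ 0 := by linarith
    have h2 : x ≠ 0 := by linarith
    field_simp
  rwa [hval] at h

lemma hasDerivAt_E {x : ℝ} (hx : x ∈ Ioo (0:ℝ) 1) :
    HasDerivAt E ((E x - K x) / (2*x)) x := by
  have h := hasDerivAt_param (1/2) (by norm_num) hx
  have hfun : (fun y => ∫ t in (0:ℝ)..(π/2), (1 - y * Real.sin t ^ 2) ^ ((1/2):ℝ)) = E := rfl
  rw [hfun] at h
  have hx0 : (0:ℝ) < x := hx.1
  have hptw : ∀ t : ℝ,
      ((1/2):ℝ) * (1 - x * Real.sin t ^ 2) ^ (((1/2):ℝ) - 1) * (-(Real.sin t ^ 2))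
        = (1/(2*x)) * ((1 - x * Real.sin t ^ 2) ^ ((1/2):ℝ)
            - (1 - x * Real.sin t ^ 2) ^ (-(1/2):ℝ)) := by
    intro t
    have hu := u_pos hx t
    rw [show (((1/2):ℝ) - 1) = -(1/2) by norm_num]
    rw [rpow_one_half_eq hu]
    field_simp
    ring
  have hval : (∫ t in (0:ℝ)..(π/2),
      ((1/2):ℝ) * (1 - x * Real.sin t ^ 2) ^ (((1/2):ℝ) - 1) * (-(Real.sin t ^ 2)))
      = (E x - K x) / (2*x) := by
    rw [intervalIntegral.integral_congr (g := fun t => (1/(2*x)) *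
        ((1 - x * Real.sin t ^ 2) ^ ((1/2):ℝ) - (1 - x * Real.sin t ^ 2) ^ (-(1/2):ℝ)))
      (fun t _ => hptw t)]
    rw [intervalIntegral.integral_const_mul,
      intervalIntegral.integral_sub (intInt_u_rpow hx (1/2)) (intInt_u_rpow hx (-(1/2)))]
    have hK : (∫ t in (0:ℝ)..(π/2), (1 - x * Real.sin t ^ 2) ^ (-(1/2):ℝ)) = K x := rfl
    have hE : (∫ t in (0:ℝ)..(π/2), (1 - x * Real.sin t ^ 2) ^ ((1/2):ℝ)) = E x := rfl
    rw [hK, hE]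
    field_simp
  rwa [hval] at h

lemma K_def (x : ℝ) : K x = ∫ t in (0:ℝ)..(π/2), (1 - x * Real.sin t ^ 2) ^ (-(1/2):ℝ) := rfl
lemma E_def (x : ℝ) : E x = ∫ t in (0:ℝ)..(π/2), (1 - x * Real.sin t ^ 2) ^ ((1/2):ℝ) := rfl

lemma pi_div_two_pos' : (0:ℝ) < π/2 := by positivity

lemma K_ge {x : ℝ} (hx : x ∈ Ioo (0:ℝ) 1) : π/2 ≤ K x := by
  have h : ∀ t ∈ Icc (0:ℝ) (π/2), (1:ℝ) ≤ (1 - x * Real.sin t ^ 2) ^ (-(1/2):ℝ) := by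
    intro t _
    refine Real.one_le_rpow_of_pos_of_le_one_of_nonpos (u_pos hx t) ?_ (by norm_num)
    nlinarith [sq_nonneg (Real.sin t), hx.1]
  have := intervalIntegral.integral_mono_on (f := fun _ => (1:ℝ))
    (g := fun t => (1 - x * Real.sin t ^ 2) ^ (-(1/2):ℝ)) pi_div_two_pos'.le
    intervalIntegrable_const (intInt_u_rpow hx _) h
  simpa [K_def] using this

lemma K_pos {x : ℝ} (hx : x ∈ Ioo (0:ℝ) 1) : 0 < K x :=
  lt_of_lt_of_le pi_div_two_pos' (K_ge hx)

lemma E_le_pi_div_two {x : ℝ} (hx : x ∈ Ioo (0:ℝ) 1) : E x ≤ π/2 := by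
  have h : ∀ t ∈ Icc (0:ℝ) (π/2), (1 - x * Real.sin t ^ 2) ^ ((1/2):ℝ) ≤ (1:ℝ) := by
    intro t _
    refine Real.rpow_le_one (u_pos hx t).le ?_ (by norm_num)
    nlinarith [sq_nonneg (Real.sin t), hx.1]
  have := intervalIntegral.integral_mono_on (g := fun _ => (1:ℝ))
    (f := fun t => (1 - x * Real.sin t ^ 2) ^ ((1/2):ℝ)) pi_div_two_pos'.le
    (intInt_u_rpow hx _) intervalIntegrable_const h
  simpa [E_def] using this

lemma E_pos {x : ℝ} (hx : x ∈ Ioo (0:ℝ) 1) : 0 < E x := by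
  have h : ∀ t ∈ Icc (0:ℝ) (π/2),
      ((1-x) ^ ((1/2):ℝ) : ℝ) ≤ (1 - x * Real.sin t ^ 2) ^ ((1/2):ℝ) := by
    intro t _
    exact Real.rpow_le_rpow (by linarith [hx.2]) (u_lb hx.1.le t) (by norm_num)
  have := intervalIntegral.integral_mono_on (f := fun _ => ((1-x) ^ ((1/2):ℝ) : ℝ))
    (g := fun t => (1 - x * Real.sin t ^ 2) ^ ((1/2):ℝ)) pi_div_two_pos'.le
    intervalIntegrable_const (intInt_u_rpow hx _) h
  have h2 : (0:ℝ) < (π/2) * (1-x) ^ ((1/2):ℝ) := by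
    have : (0:ℝ) < (1-x) ^ ((1/2):ℝ) := Real.rpow_pos_of_pos (by linarith [hx.2]) _
    positivity
  calc (0:ℝ) < (π/2) * (1-x) ^ ((1/2):ℝ) := h2
    _ ≤ E x := by simpa [E_def, smul_eq_mul] using this

lemma E_le_K {x : ℝ} (hx : x ∈ Ioo (0:ℝ) 1) : E x ≤ K x := by
  have h : ∀ t ∈ Icc (0:ℝ) (π/2),
      (1 - x * Real.sin t ^ 2) ^ ((1/2):ℝ) ≤ (1 - x * Real.sin t ^ 2) ^ (-(1/2):ℝ) := by
    intro t _
    refine Real.rpow_le_rpow_of_exponent_ge (u_pos hx t) ?_ (by norm_num)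
    nlinarith [sq_nonneg (Real.sin t), hx.1]
  have := intervalIntegral.integral_mono_on pi_div_two_pos'.le
    (intInt_u_rpow hx _) (intInt_u_rpow hx _) h
  simpa [K_def, E_def] using this

lemma KE_sub_bound {x : ℝ} (hx : x ∈ Ioo (0:ℝ) 1) :
    K x - E x ≤ x * (1-x) ^ (-(1/2):ℝ) * (π/4) := by
  have hptw : ∀ t ∈ Icc (0:ℝ) (π/2),
      (1 - x * Real.sin t ^ 2) ^ (-(1/2):ℝ) - (1 - x * Real.sin t ^ 2) ^ ((1/2):ℝ)
        ≤ x * (1-x) ^ (-(1/2):ℝ) * Real.sin t ^ 2 := by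
    intro t _
    have hu := u_pos hx t
    have h1 : (1 - x * Real.sin t ^ 2) ^ (-(1/2):ℝ) ≤ (1-x) ^ (-(1/2):ℝ) :=
      Real.rpow_le_rpow_of_nonpos (by linarith [hx.2]) (u_lb hx.1.le t) (by norm_num)
    have h2 : (1 - x * Real.sin t ^ 2) ^ (-(1/2):ℝ)
        - (1 - x * Real.sin t ^ 2) ^ ((1/2):ℝ)
        = x * Real.sin t ^ 2 * (1 - x * Real.sin t ^ 2) ^ (-(1/2):ℝ) := by
      rw [rpow_one_half_eq hu]; ring
    rw [h2]
    have hs0 : (0:ℝ) ≤ x * Real.sin t ^ 2 :=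
      mul_nonneg hx.1.le (sq_nonneg _)
    calc x * Real.sin t ^ 2 * (1 - x * Real.sin t ^ 2) ^ (-(1/2):ℝ)
        ≤ x * Real.sin t ^ 2 * (1-x) ^ (-(1/2):ℝ) := by
          exact mul_le_mul_of_nonneg_left h1 hs0
      _ = x * (1-x) ^ (-(1/2):ℝ) * Real.sin t ^ 2 := by ring
  have hint : IntervalIntegrable
      (fun t => (1 - x * Real.sin t ^ 2) ^ (-(1/2):ℝ) - (1 - x * Real.sin t ^ 2) ^ ((1/2):ℝ))
      volume 0 (π/2) := (intInt_u_rpow hx _).sub (intInt_u_rpow hx _)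
  have hint2 : IntervalIntegrable (fun t => x * (1-x) ^ (-(1/2):ℝ) * Real.sin t ^ 2)
      volume 0 (π/2) := by
    apply Continuous.intervalIntegrable
    continuity
  have hmono := intervalIntegral.integral_mono_on pi_div_two_pos'.le hint hint2 hptw
  rw [intervalIntegral.integral_sub (intInt_u_rpow hx _) (intInt_u_rpow hx _)] at hmono
  rw [intervalIntegral.integral_const_mul, integral_sin_sq] at hmono
  rw [K_def, E_def]
  have : Real.sin (π/2) * Real.cos (π/2) = 0 := by simp
  calc (∫ t in (0:ℝ)..(π/2), (1 - x * Real.sin t ^ 2) ^ (-(1/2):ℝ))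
      - (∫ t in (0:ℝ)..(π/2), (1 - x * Real.sin t ^ 2) ^ ((1/2):ℝ))
      ≤ x * (1-x) ^ (-(1/2):ℝ) *
        ((Real.sin 0 * Real.cos 0 - Real.sin (π/2) * Real.cos (π/2) + π/2 - 0)/2) := hmono
    _ = x * (1-x) ^ (-(1/2):ℝ) * (π/4) := by
        rw [Real.sin_zero, Real.cos_pi_div_two]; ring

lemma K_lower {x : ℝ} (hx : x ∈ Ioo (0:ℝ) 1) :
    Real.log (Real.sqrt (1-x) + π/2) - Real.log (Real.sqrt (1-x)) ≤ K x := by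
  set e := Real.sqrt (1-x) with he
  have hepos : 0 < e := Real.sqrt_pos.mpr (by linarith [hx.2])
  have he2 : e ^ 2 = 1 - x := Real.sq_sqrt (by linarith [hx.2])
  -- pointwise bound
  have hptw : ∀ t ∈ Icc (0:ℝ) (π/2),
      (e + (π/2 - t))⁻¹ ≤ (1 - x * Real.sin t ^ 2) ^ (-(1/2):ℝ) := by
    intro t ht
    have hu := u_pos hx t
    have hcos0 : 0 ≤ Real.cos t := Real.cos_nonneg_of_mem_Icc
      ⟨by linarith [ht.1, Real.pi_pos], ht.2⟩
    have hsq : 1 - x * Real.sin t ^ 2 ≤ (e + Real.cos t) ^ 2 := by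
      have hs := Real.sin_sq_add_cos_sq t
      nlinarith [hx.1, hx.2, sq_nonneg (Real.cos t), mul_nonneg hepos.le hcos0]
    have h1 : ((e + Real.cos t) ^ 2) ^ (-(1/2):ℝ) ≤ (1 - x * Real.sin t ^ 2) ^ (-(1/2):ℝ) :=
      Real.rpow_le_rpow_of_nonpos hu hsq (by norm_num)
    have hec : 0 < e + Real.cos t := by linarith
    have h2 : ((e + Real.cos t) ^ 2) ^ (-(1/2):ℝ) = (e + Real.cos t)⁻¹ := by
      rw [← Real.rpow_natCast (e + Real.cos t) 2, ← Real.rpow_mul hec.le]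
      norm_num [Real.rpow_neg_one]
    have hct : Real.cos t ≤ π/2 - t := by
      have := Real.sin_le (by linarith [ht.2] : (0:ℝ) ≤ π/2 - t)
      rwa [Real.sin_pi_div_two_sub] at this
    have h3 : (e + (π/2 - t))⁻¹ ≤ (e + Real.cos t)⁻¹ := by
      apply inv_anti₀ hec
      linarith
    calc (e + (π/2 - t))⁻¹ ≤ (e + Real.cos t)⁻¹ := h3
      _ = ((e + Real.cos t) ^ 2) ^ (-(1/2):ℝ) := h2.symm
      _ ≤ (1 - x * Real.sin t ^ 2) ^ (-(1/2):ℝ) := h1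
  -- integrability of lower function
  have hcont : ContinuousOn (fun t => (e + (π/2 - t))⁻¹) (uIcc (0:ℝ) (π/2)) := by
    apply ContinuousOn.inv₀
    · fun_prop
    · intro t ht
      rw [uIcc_of_le pi_div_two_pos'.le] at ht
      have := ht.2
      nlinarith [hepos]
  have hint : IntervalIntegrable (fun t => (e + (π/2 - t))⁻¹) volume 0 (π/2) :=
    hcont.intervalIntegrable
  -- value of lower integral by FTC
  have hFTC : (∫ t in (0:ℝ)..(π/2), (e + (π/2 - t))⁻¹)
      = Real.log (e + π/2) - Real.log e := by
    have hderiv : ∀ t ∈ uIcc (0:ℝ) (π/2),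
        HasDerivAt (fun t => -Real.log (e + (π/2 - t))) ((e + (π/2 - t))⁻¹) t := by
      intro t ht
      rw [uIcc_of_le pi_div_two_pos'.le] at ht
      have hne : e + (π/2 - t) ≠ 0 := by nlinarith [hepos, ht.2]
      have hg : HasDerivAt (fun t : ℝ => e + (π/2 - t)) (-1) t := by
        simpa using ((hasDerivAt_id t).const_sub (π/2)).const_add e
      have := (hg.log hne).neg
      refine HasDerivAt.congr_deriv this (Eq.symm ?_)
      field_simp
    rw [intervalIntegral.integral_eq_sub_of_hasDerivAt hderiv hint]
    simp
    ring
  have hmono := intervalIntegral.integral_mono_on pi_div_two_pos'.le hint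
    (intInt_u_rpow hx _) hptw
  rw [hFTC] at hmono
  simpa [K_def] using hmono

lemma integral_sin_sq_val : (∫ t in (0:ℝ)..(π/2), Real.sin t ^ 2) = π/4 := by
  rw [integral_sin_sq]
  simp
  ring

lemma integral_sin_four_val : (∫ t in (0:ℝ)..(π/2), Real.sin t ^ 4) = 3*π/16 := by
  have h := integral_sin_pow (a := 0) (b := π/2) 2
  norm_num [Real.cos_pi_div_two] at h
  rw [h]
  ring

lemma quad_integral (lam x : ℝ) :
    (∫ t in (0:ℝ)..(π/2), (lam * (1 - x * Real.sin t ^ 2) - 1)^2)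
      = (lam-1)^2*(π/2) + (-(2*(lam-1)*lam*x))*(π/4) + lam^2*x^2*(3*π/16) := by
  have hcongr : ∀ t ∈ uIcc (0:ℝ) (π/2),
      (lam * (1 - x * Real.sin t ^ 2) - 1)^2
        = (lam-1)^2 + (-(2*(lam-1)*lam*x)) * Real.sin t ^ 2
          + lam^2*x^2 * Real.sin t ^ 4 := by
    intro t _; ring
  rw [intervalIntegral.integral_congr hcongr]
  have i1 : IntervalIntegrable (fun _ : ℝ => ((lam-1)^2 : ℝ)) volume 0 (π/2) :=
    intervalIntegrable_const
  have i2 : IntervalIntegrable (fun t : ℝ => (-(2*(lam-1)*lam*x)) * Real.sin t ^ 2)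
      volume 0 (π/2) := by
    apply Continuous.intervalIntegrable; continuity
  have i3 : IntervalIntegrable (fun t : ℝ => lam^2*x^2 * Real.sin t ^ 4)
      volume 0 (π/2) := by
    apply Continuous.intervalIntegrable; continuity
  rw [intervalIntegral.integral_add (i1.add i2) i3, intervalIntegral.integral_add i1 i2,
    intervalIntegral.integral_const_mul, intervalIntegral.integral_const_mul,
    integral_sin_sq_val, integral_sin_four_val]
  simp
  ring

lemma quad_pos {x : ℝ} (hx0 : 0 < x) (lam : ℝ) :
    0 < (lam-1)^2*(π/2) + (-(2*(lam-1)*lam*x))*(π/4) + lam^2*x^2*(3*π/16) := by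
  have hpi := Real.pi_pos
  rcases eq_or_ne lam 0 with h | h
  · subst h; nlinarith
  · have h1 : 0 < lam^2*x^2 := by positivity
    nlinarith [sq_nonneg (2*(lam-1) - lam*x), sq_nonneg (lam*x)]

lemma cauchy_schwarz_EK {x : ℝ} (hx : x ∈ Ioo (0:ℝ) 1) :
    (K x)^2 * (1-x) < (E x)^2 := by
  have hx1 : (0:ℝ) < 1 - x := by linarith [hx.2]
  have hEpos := E_pos hx
  set lam := K x / E x with hlam
  have hptw : ∀ t ∈ Icc (0:ℝ) (π/2),
      (lam * (1 - x * Real.sin t ^ 2) - 1)^2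
        ≤ lam^2 * (1 - x * Real.sin t ^ 2) ^ ((1/2):ℝ)
          - 2 * lam * (1 - x * Real.sin t ^ 2) ^ (-(1/2):ℝ)
          + (1 - x * Real.sin t ^ 2) ^ (-(3/2):ℝ) := by
    intro t _
    have hu := u_pos hx t
    have hu1 : 1 - x * Real.sin t ^ 2 ≤ 1 := by
      nlinarith [sq_nonneg (Real.sin t), hx.1]
    have h32 : (1:ℝ) ≤ (1 - x * Real.sin t ^ 2) ^ (-(3/2):ℝ) :=
      Real.one_le_rpow_of_pos_of_le_one_of_nonpos hu hu1 (by norm_num)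
    rw [rpow_half_eq hu, rpow_neg_half_eq hu]
    nlinarith [sq_nonneg (lam * (1 - x * Real.sin t ^ 2) - 1), h32,
      mul_le_mul_of_nonneg_left h32 (sq_nonneg (lam * (1 - x * Real.sin t ^ 2) - 1))]
  have hint1 : IntervalIntegrable (fun t => (lam * (1 - x * Real.sin t ^ 2) - 1)^2)
      volume 0 (π/2) := by
    apply Continuous.intervalIntegrable; continuity
  have hintg : IntervalIntegrable (fun t => lam^2 * (1 - x * Real.sin t ^ 2) ^ ((1/2):ℝ)
      - 2 * lam * (1 - x * Real.sin t ^ 2) ^ (-(1/2):ℝ)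
      + (1 - x * Real.sin t ^ 2) ^ (-(3/2):ℝ)) volume 0 (π/2) :=
    (((intInt_u_rpow hx _).const_mul _).sub ((intInt_u_rpow hx _).const_mul _)).add
      (intInt_u_rpow hx _)
  have hnn := intervalIntegral.integral_mono_on (μ := volume) pi_div_two_pos'.le
    hint1 hintg hptw
  rw [intervalIntegral.integral_add (((intInt_u_rpow hx _).const_mul _).sub
      ((intInt_u_rpow hx _).const_mul _)) (intInt_u_rpow hx _),
    intervalIntegral.integral_sub ((intInt_u_rpow hx _).const_mul _)
      ((intInt_u_rpow hx _).const_mul _),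
    intervalIntegral.integral_const_mul, intervalIntegral.integral_const_mul,
    int_u32 hx, ← E_def, ← K_def, quad_integral] at hnn
  have hq := quad_pos hx.1 lam
  have hstrict : 0 < lam^2 * E x - 2*lam*K x + E x/(1-x) := lt_of_lt_of_le hq hnn
  have ha : lam^2 * E x = (K x)^2 / E x := by
    rw [hlam]; field_simp
  have h3 : lam * K x = (K x)^2 / (E x) := by
    rw [hlam]; field_simp
  have h4 : (K x)^2 / E x < E x / (1-x) := by linarith
  rw [div_lt_div_iff₀ hEpos hx1] at h4
  nlinarith [h4]

noncomputable def W (x : ℝ) : ℝ := (K x - E x) / (x * K x)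

lemma hasDerivAt_W {x : ℝ} (hx : x ∈ Ioo (0:ℝ) 1) :
    HasDerivAt W (((((E x - (1-x)*K x)/(2*x*(1-x))) - ((E x - K x)/(2*x))) * (x * K x)
      - (K x - E x) * (1 * K x + x * ((E x - (1-x)*K x)/(2*x*(1-x))))) / (x * K x)^2) x := by
  have hK := hasDerivAt_K hx
  have hE := hasDerivAt_E hx
  have hne : x * K x ≠ 0 := by
    have := K_pos hx
    have := hx.1
    positivity
  exact (hK.sub hE).div ((hasDerivAt_id x).mul hK) hne

lemma deriv_W_pos {x : ℝ} (hx : x ∈ Ioo (0:ℝ) 1) : 0 < deriv W x := by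
  rw [(hasDerivAt_W hx).deriv]
  have hx0 := hx.1
  have hx1 : (0:ℝ) < 1 - x := by linarith [hx.2]
  have hKpos := K_pos hx
  have hCS := cauchy_schwarz_EK hx
  have hnum : ((((E x - (1-x)*K x)/(2*x*(1-x))) - ((E x - K x)/(2*x))) * (x * K x)
      - (K x - E x) * (1 * K x + x * ((E x - (1-x)*K x)/(2*x*(1-x)))))
      = ((E x)^2 - (1-x)*(K x)^2)/(2*(1-x)) := by
    field_simp
    ring
  rw [hnum]
  have h1 : 0 < (E x)^2 - (1-x)*(K x)^2 := by nlinarith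
  positivity

lemma W_mono : StrictMonoOn W (Ioo (0:ℝ) 1) := by
  apply strictMonoOn_of_deriv_pos (convex_Ioo 0 1)
  · exact fun x hx => (hasDerivAt_W hx).continuousAt.continuousWithinAt
  · rw [interior_Ioo]
    exact fun x hx => deriv_W_pos hx

lemma W_upper {x : ℝ} (hx : x ∈ Ioo (0:ℝ) 1) : W x ≤ (1-x) ^ (-(1/2):ℝ) / 2 := by
  have hx0 := hx.1
  have hKpos := K_pos hx
  have hKge := K_ge hx
  have hsub := KE_sub_bound hx
  have hB : (0:ℝ) < (1-x) ^ (-(1/2):ℝ) := Real.rpow_pos_of_pos (by linarith [hx.2]) _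
  have hxK : (0:ℝ) < x * K x := by positivity
  rw [W, div_le_iff₀ hxK]
  have hpi := Real.pi_pos
  nlinarith [mul_le_mul_of_nonneg_left hKge (mul_nonneg hx0.le hB.le)]

lemma sq_rpow_neg_half {y : ℝ} (hy : 0 < y) : (y^2) ^ (-(1/2):ℝ) = y⁻¹ := by
  rw [← Real.rpow_natCast y 2, ← Real.rpow_mul hy.le]
  norm_num [Real.rpow_neg_one]

lemma hasDerivAt_h (p : ℝ) {x : ℝ} (hx : x ∈ Ioo (0:ℝ) 1) :
    HasDerivAt (fun y : ℝ => (1-y) ^ p * K y)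
      ((1-x) ^ (p-1) * (E x + ((1 - 2*p)*x - 1) * K x) / (2*x)) x := by
  have hx0 := hx.1
  have h1x : (0:ℝ) < 1 - x := by linarith [hx.2]
  have h1 : HasDerivAt (fun y : ℝ => (1-y) ^ p) (-1 * p * (1-x) ^ (p-1)) x :=
    HasDerivAt.rpow_const (by simpa using (hasDerivAt_id x).const_sub 1)
      (Or.inl h1x.ne')
  have hprod := h1.mul (hasDerivAt_K hx)
  refine HasDerivAt.congr_deriv hprod (Eq.symm ?_)
  have h := Real.rpow_add h1x 1 (p-1)
  rw [Real.rpow_one] at h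
  have hsplit : (1-x) ^ p = (1-x) * (1-x) ^ (p-1) := by
    calc (1-x)^p = (1-x)^(1 + (p-1)) := by congr 1; ring
    _ = (1-x) * (1-x)^(p-1) := h
  rw [hsplit]
  field_simp
  ring

set_option maxHeartbeats 2000000 in
theorem stmt16 (p : ℝ) (hp : p ∈ Ioo (0 : ℝ) (1/4)) :
    ∃! xp : ℝ, xp ∈ Ioo (0 : ℝ) 1 ∧
      StrictMonoOn (fun x : ℝ => (1 - x) ^ p * K x) (Ioo 0 xp) ∧
      StrictAntiOn (fun x : ℝ => (1 - x) ^ p * K x) (Ioo xp 1) ∧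
      (∀ y ∈ Ioo (0 : ℝ) 1, E y + ((1 - 2 * p) * y - 1) * K y = 0 ↔ y = xp) := by
  obtain ⟨hp0, hp4⟩ := hp
  obtain ⟨q, hq⟩ : ∃ q : ℝ, q = 1 - 2*p := ⟨_, rfl⟩
  have hq12 : (1:ℝ)/2 < q := by rw [hq]; linarith
  have hq1 : q < 1 := by rw [hq]; linarith
  have hqpos : 0 < q := by linarith
  -- the relation between g and W
  have hgW : ∀ y ∈ Ioo (0:ℝ) 1, E y + ((1 - 2*p)*y - 1) * K y = y * K y * (q - W y) := by
    intro y hy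
    have hK := (K_pos hy).ne'
    have hy0 := hy.1.ne'
    rw [W, hq]
    field_simp
    ring
  -- choice of a
  set r : ℝ := (2*q)⁻¹ with hr
  clear_value r
  have hrpos : 0 < r := by rw [hr]; positivity
  have hr1 : r < 1 := by
    rw [hr, inv_lt_one_iff₀]
    right; linarith
  set a : ℝ := (1 - r^2)/2 with ha
  clear_value a
  have har : r^2 < 1 := by nlinarith
  have ha01 : a ∈ Ioo (0:ℝ) 1 := by
    constructor
    · rw [ha]; nlinarith
    · rw [ha]; nlinarith [sq_nonneg r]
  have haa : r^2 < 1 - a := by rw [ha]; nlinarith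
  have hWa : W a < q := by
    have h1 := W_upper ha01
    have h2 : (1-a) ^ (-(1/2):ℝ) < (r^2) ^ (-(1/2):ℝ) :=
      Real.rpow_lt_rpow_of_neg (by positivity) haa (by norm_num)
    rw [sq_rpow_neg_half hrpos, hr, inv_inv] at h2
    linarith
  -- choice of b
  set L : ℝ := π/(4*p) + 1 with hL
  clear_value L
  have hpi := Real.pi_pos
  have hLpos : 0 < L := by
    rw [hL]
    have h9 : 0 < π/(4*p) := by positivity
    linarith
  have hL1 : (1:ℝ) < L := by
    rw [hL]
    have h9 : 0 < π/(4*p) := by positivity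
    linarith
  set eb : ℝ := (π/2) * Real.exp (-L) with heb
  clear_value eb
  have hebpos : 0 < eb := by rw [heb]; positivity
  have heb1 : eb < 1 := by
    rw [heb]
    have h1 : Real.exp (-L) < Real.exp 0 := Real.exp_lt_exp.mpr (by linarith)
    rw [Real.exp_zero] at h1
    have h2 : π/2 < 2 := by nlinarith [Real.pi_lt_d2]
    have hexp2 : (2:ℝ) < Real.exp L := by
      have := Real.add_one_le_exp L
      linarith
    have h3 : Real.exp (-L) < 1/2 := by
      rw [Real.exp_neg, inv_lt_comm₀ (Real.exp_pos L) (by norm_num : (0:ℝ) < 1/2)]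
      norm_num
      linarith
    nlinarith [Real.exp_pos (-L)]
  set b : ℝ := 1 - eb^2 with hb
  clear_value b
  have hb01 : b ∈ Ioo (0:ℝ) 1 := by
    constructor
    · rw [hb]; nlinarith
    · rw [hb]; nlinarith
  have hsqrtb : Real.sqrt (1 - b) = eb := by
    have h9 : (1:ℝ) - b = eb^2 := by rw [hb]; ring
    rw [h9, Real.sqrt_sq hebpos.le]
  have hKb : π/(4*p) < K b := by
    have hlow := K_lower hb01
    rw [hsqrtb] at hlow
    have hreb : (eb + π/2)/eb = 1 + Real.exp L := by
      rw [heb]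
      rw [Real.exp_neg]
      field_simp
    have hlog : Real.log (eb + π/2) - Real.log eb = Real.log ((eb + π/2)/eb) := by
      rw [Real.log_div (by linarith : (0:ℝ) < eb + π/2).ne' hebpos.ne']
    rw [hlog, hreb] at hlow
    have h2 : L < Real.log (1 + Real.exp L) := by
      have h3 : Real.exp L < 1 + Real.exp L := by linarith
      have := Real.log_lt_log (Real.exp_pos L) h3
      rwa [Real.log_exp] at this
    have : π/(4*p) < L := by rw [hL]; linarith
    linarith
  have hWb : q < W b := by
    have hKpos := K_pos hb01
    have hEK := E_le_pi_div_two hb01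
    have hE2p : E b < 2*p*K b := by
      have h1 : π/2 < 2*p*K b := by
        have := (div_lt_iff₀ (by positivity : (0:ℝ) < 4*p)).mp hKb
        nlinarith
      linarith
    rw [W, lt_div_iff₀ (mul_pos hb01.1 (K_pos hb01))]
    have hb1 : b < 1 := hb01.2
    have hbpos := hb01.1
    have h6 : b * K b < K b := by nlinarith
    have h7 := mul_lt_mul_of_pos_left h6 hqpos
    have hqK : q * K b = K b - 2*p*K b := by rw [hq]; ring
    linarith
  -- a < b
  have hab : a < b := by
    by_contra hcon
    push_neg at hcon
    rcases eq_or_lt_of_le hcon with h | h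
    · rw [h] at hWb; linarith
    · have := W_mono hb01 ha01 h
      linarith
  -- IVT
  have hcontW : ContinuousOn W (Icc a b) := by
    intro y hy
    have hy01 : y ∈ Ioo (0:ℝ) 1 := ⟨lt_of_lt_of_le ha01.1 hy.1, lt_of_le_of_lt hy.2 hb01.2⟩
    exact (hasDerivAt_W hy01).continuousAt.continuousWithinAt
  have hmem : q ∈ Ioo (W a) (W b) := ⟨hWa, hWb⟩
  obtain ⟨xp, hxpab, hWxp⟩ := intermediate_value_Ioo hab.le hcontW hmem
  have hxp01 : xp ∈ Ioo (0:ℝ) 1 := ⟨lt_trans ha01.1 hxpab.1, lt_trans hxpab.2 hb01.2⟩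
  -- sign of g
  have hgpos : ∀ y ∈ Ioo (0:ℝ) 1, y < xp → 0 < E y + ((1 - 2*p)*y - 1) * K y := by
    intro y hy hylt
    rw [hgW y hy]
    have hWy : W y < q := by rw [← hWxp]; exact W_mono hy hxp01 hylt
    have := K_pos hy
    have := hy.1
    have h1 : (0:ℝ) < y * K y := by positivity
    nlinarith
  have hgneg : ∀ y ∈ Ioo (0:ℝ) 1, xp < y → E y + ((1 - 2*p)*y - 1) * K y < 0 := by
    intro y hy hylt
    rw [hgW y hy]
    have hWy : q < W y := by rw [← hWxp]; exact W_mono hxp01 hy hylt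
    have := K_pos hy
    have := hy.1
    have h1 : (0:ℝ) < y * K y := by positivity
    nlinarith
  have hgzero : E xp + ((1 - 2*p)*xp - 1) * K xp = 0 := by
    rw [hgW xp hxp01, hWxp]
    ring
  refine ⟨xp, ⟨hxp01, ?_, ?_, ?_⟩, ?_⟩
  · -- StrictMonoOn on Ioo 0 xp
    apply strictMonoOn_of_deriv_pos (convex_Ioo 0 xp)
    · intro y hy
      have hy01 : y ∈ Ioo (0:ℝ) 1 := ⟨hy.1, lt_trans hy.2 hxp01.2⟩
      exact (hasDerivAt_h p hy01).continuousAt.continuousWithinAt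
    · rw [interior_Ioo]
      intro y hy
      have hy01 : y ∈ Ioo (0:ℝ) 1 := ⟨hy.1, lt_trans hy.2 hxp01.2⟩
      rw [(hasDerivAt_h p hy01).deriv]
      have hg := hgpos y hy01 hy.2
      have h1y : (0:ℝ) < 1 - y := by linarith [hy01.2]
      have := hy.1
      have h2 : (0:ℝ) < (1-y) ^ (p-1) := Real.rpow_pos_of_pos h1y _
      positivity
  · -- StrictAntiOn on Ioo xp 1
    apply strictAntiOn_of_deriv_neg (convex_Ioo xp 1)
    · intro y hy
      have hy01 : y ∈ Ioo (0:ℝ) 1 := ⟨lt_trans hxp01.1 hy.1, hy.2⟩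
      exact (hasDerivAt_h p hy01).continuousAt.continuousWithinAt
    · rw [interior_Ioo]
      intro y hy
      have hy01 : y ∈ Ioo (0:ℝ) 1 := ⟨lt_trans hxp01.1 hy.1, hy.2⟩
      rw [(hasDerivAt_h p hy01).deriv]
      have hg := hgneg y hy01 hy.1
      have h1y : (0:ℝ) < 1 - y := by linarith [hy01.2]
      have hy0 := hy01.1
      have h2 : (0:ℝ) < (1-y) ^ (p-1) := Real.rpow_pos_of_pos h1y _
      have h3 : (0:ℝ) < 2*y := by linarith
      exact div_neg_of_neg_of_pos (mul_neg_of_pos_of_neg h2 hg) h3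
  · -- characterization of the zero
    intro y hy
    constructor
    · intro hzero
      rw [hgW y hy] at hzero
      have hK := (K_pos hy).ne'
      have hy0 := hy.1.ne'
      have hWq : W y = q := by
        rcases mul_eq_zero.mp hzero with h | h
        · exact absurd h (by positivity)
        · linarith
      exact W_mono.injOn hy hxp01 (by rw [hWq, hWxp])
    · intro h; subst h; exact hgzero
  · -- uniqueness
    rintro y ⟨hy01, _, _, hyiff⟩
    exact ((hyiff xp hxp01).mp hgzero).symm
end

section
/- For all p ≥ 1/4 and all r ∈ (0,1), (π/2)·(1-r)^p < K(r) < (π/2)·(1-r)^{-p}. -/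
set_option maxHeartbeats 1000000

open Real Set Filter Topology intervalIntegral

lemma aux_den_pos {r : ℝ} (hr0 : 0 < r) (hr1 : r < 1) (t : ℝ) :
    0 < 1 - r * Real.sin t ^ 2 := by
  nlinarith [Real.sin_sq_le_one t]

lemma aux_integral_inv {r : ℝ} (hr : r ∈ Ioo (0:ℝ) 1) :
    ∫ t in (0:ℝ)..(π/2), (1 - r * Real.sin t ^ 2)⁻¹ = π / (2 * Real.sqrt (1 - r)) := by
  obtain ⟨hr0, hr1⟩ := hr
  set s := Real.sqrt (1 - r) with hs_def
  have h1r : (0:ℝ) < 1 - r := by linarith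
  have hs : 0 < s := Real.sqrt_pos.2 h1r
  have hs2 : s ^ 2 = 1 - r := Real.sq_sqrt h1r.le
  have hden : ∀ t : ℝ, 0 < 1 - r * Real.sin t ^ 2 := aux_den_pos hr0 hr1
  have hg : Continuous fun t : ℝ => (1 - r * Real.sin t ^ 2)⁻¹ :=
    Continuous.inv₀ (by continuity) fun t => (hden t).ne'
  have hJcont : Continuous fun b => ∫ t in (0:ℝ)..b, (1 - r * Real.sin t ^ 2)⁻¹ :=
    intervalIntegral.continuous_primitive (fun a b => hg.intervalIntegrable a b) 0
  have hFT : ∀ b ∈ Ico (0:ℝ) (π/2),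
      ∫ t in (0:ℝ)..b, (1 - r * Real.sin t ^ 2)⁻¹ = s⁻¹ * Real.arctan (s * Real.tan b) := by
    intro b hb
    have key : ∀ t ∈ uIcc (0:ℝ) b, HasDerivAt (fun x => s⁻¹ * Real.arctan (s * Real.tan x))
        ((1 - r * Real.sin t ^ 2)⁻¹) t := by
      intro t ht'
      have ht : t ∈ Icc (0:ℝ) b := by rwa [uIcc_of_le hb.1] at ht'
      have htlt : t < π/2 := lt_of_le_of_lt ht.2 hb.2
      have hcos : 0 < Real.cos t := Real.cos_pos_of_mem_Ioo ⟨by nlinarith [ht.1, Real.pi_pos], htlt⟩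
      have h1 : HasDerivAt (fun x => Real.tan x) (1 / Real.cos t ^ 2) t :=
        Real.hasDerivAt_tan hcos.ne'
      have h2 : HasDerivAt (fun x => s * Real.tan x) (s * (1 / Real.cos t ^ 2)) t := h1.const_mul s
      have h3 : HasDerivAt (fun x => Real.arctan (s * Real.tan x))
          (1 / (1 + (s * Real.tan t) ^ 2) * (s * (1 / Real.cos t ^ 2))) t :=
        (Real.hasDerivAt_arctan (s * Real.tan t)).comp (h₂ := Real.arctan) t h2
      have h4 := h3.const_mul s⁻¹
      refine h4.congr_deriv ?_
      symm
      have hne1 : (1 - r * Real.sin t ^ 2) ≠ 0 := (hden t).ne'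
      have hne2 : (1 + (s * Real.tan t) ^ 2) ≠ 0 := by positivity
      rw [Real.tan_eq_sin_div_cos]
      field_simp
      linear_combination (Real.sin t^2) * hs2 + Real.sin_sq_add_cos_sq t
    rw [intervalIntegral.integral_eq_sub_of_hasDerivAt key (hg.intervalIntegrable 0 b)]
    simp
  have hlim1 : Tendsto (fun b => ∫ t in (0:ℝ)..b, (1 - r * Real.sin t ^ 2)⁻¹)
      (𝓝[<] (π/2)) (𝓝 (∫ t in (0:ℝ)..(π/2), (1 - r * Real.sin t ^ 2)⁻¹)) :=
    (hJcont.continuousAt.tendsto).mono_left nhdsWithin_le_nhds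
  have hlim2 : Tendsto (fun b => s⁻¹ * Real.arctan (s * Real.tan b))
      (𝓝[<] (π/2)) (𝓝 (s⁻¹ * (π/2))) := by
    have h1 : Tendsto (fun b => s * Real.tan b) (𝓝[<] (π/2)) atTop :=
      (Real.tendsto_tan_pi_div_two).const_mul_atTop hs
    have h2 : Tendsto (fun b => Real.arctan (s * Real.tan b)) (𝓝[<] (π/2)) (𝓝 (π/2)) :=
      (Real.tendsto_arctan_atTop.mono_right nhdsWithin_le_nhds).comp h1
    exact h2.const_mul s⁻¹
  have heq : (fun b => ∫ t in (0:ℝ)..b, (1 - r * Real.sin t ^ 2)⁻¹)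
      =ᶠ[𝓝[<] (π/2)] fun b => s⁻¹ * Real.arctan (s * Real.tan b) := by
    filter_upwards [Ioo_mem_nhdsLT_of_mem (⟨by positivity, le_refl _⟩ :
      (π/2:ℝ) ∈ Ioc (0:ℝ) (π/2))] with b hb
    exact hFT b ⟨hb.1.le, hb.2⟩
  have := tendsto_nhds_unique (hlim1) (hlim2.congr' heq.symm)
  rw [this]
  field_simp

theorem stmt19 (p : ℝ) (hp : p ≥ 1/4) :
    ∀ r ∈ Ioo (0 : ℝ) 1,
      (π / 2) * (1 - r) ^ p < K r ∧ K r < (π / 2) * (1 - r) ^ (-p) := by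
  intro r hr
  obtain ⟨hr0, hr1⟩ := hr
  have h1r : (0:ℝ) < 1 - r := by linarith
  have h1r1 : (1:ℝ) - r < 1 := by linarith
  have hπ : (0:ℝ) < π := Real.pi_pos
  have hden : ∀ t : ℝ, 0 < 1 - r * Real.sin t ^ 2 := aux_den_pos hr0 hr1
  -- integrand is continuous
  have hfc : Continuous fun t : ℝ => (1 - r * Real.sin t ^ 2) ^ (-(1/2) : ℝ) := by
    apply Continuous.rpow_const (by continuity)
    exact fun t => Or.inl (hden t).ne'
  -- lower bound
  have hK_ge : π / 2 ≤ K r := by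
    have h1 : ∀ t ∈ Icc (0:ℝ) (π/2), (1:ℝ) ≤ (1 - r * Real.sin t ^ 2) ^ (-(1/2) : ℝ) := by
      intro t _
      apply Real.one_le_rpow_of_pos_of_le_one_of_nonpos (hden t)
      · nlinarith [sq_nonneg (Real.sin t)]
      · norm_num
    calc π / 2 = ∫ _ in (0:ℝ)..(π/2), (1:ℝ) := by simp
    _ ≤ K r := by
      apply intervalIntegral.integral_mono_on (by positivity)
        intervalIntegrable_const (hfc.intervalIntegrable 0 (π/2)) h1
  have hlow : (π / 2) * (1 - r) ^ p < K r := by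
    have : (1 - r : ℝ) ^ p < 1 := Real.rpow_lt_one h1r.le h1r1 (by linarith)
    nlinarith
  -- upper bound
  set c : ℝ := (1 - r) ^ (-(1/4) : ℝ) with hc_def
  have hc1 : 1 < c := Real.one_lt_rpow_of_pos_of_lt_one_of_neg h1r h1r1 (by norm_num)
  have hc0 : 0 < c := by linarith
  have hcs : c ^ 2 * Real.sqrt (1 - r) = 1 := by
    rw [Real.sqrt_eq_rpow, hc_def, ← Real.rpow_natCast ((1-r) ^ (-(1/4):ℝ)) 2,
      ← Real.rpow_mul h1r.le, ← Real.rpow_add h1r]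
    norm_num
  have hgc : Continuous fun t : ℝ => (1 - r * Real.sin t ^ 2)⁻¹ * (2 * c)⁻¹ + c / 2 :=
    ((Continuous.inv₀ (by continuity) fun t => (hden t).ne').mul continuous_const).add
      continuous_const
  have hpt : ∀ t : ℝ, (1 - r * Real.sin t ^ 2) ^ (-(1/2) : ℝ)
      ≤ (1 - r * Real.sin t ^ 2)⁻¹ * (2 * c)⁻¹ + c / 2 := by
    intro t
    set u := 1 - r * Real.sin t ^ 2 with hu_def
    have hu : 0 < u := hden t
    set a : ℝ := u ^ (-(1/4) : ℝ) with ha_def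
    have ha : 0 < a := Real.rpow_pos_of_pos hu _
    have e1 : u ^ (-(1/2) : ℝ) = a ^ 2 := by
      rw [ha_def, ← Real.rpow_natCast (u ^ (-(1/4):ℝ)) 2, ← Real.rpow_mul hu.le]; norm_num
    have e2 : u⁻¹ = a ^ 4 := by
      rw [ha_def, ← Real.rpow_natCast (u ^ (-(1/4):ℝ)) 4, ← Real.rpow_mul hu.le]
      norm_num
      rw [Real.rpow_neg_one]
    rw [e1, e2]
    have key : a ^ 4 * (2*c)⁻¹ + c/2 - a^2 = (a^2 - c)^2 / (2*c) := by
      field_simp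
      ring
    nlinarith [div_nonneg (sq_nonneg (a^2-c)) (by positivity : (0:ℝ) ≤ 2*c)]
  have hstrict0 : (1 - r * Real.sin 0 ^ 2) ^ (-(1/2) : ℝ)
      < (1 - r * Real.sin 0 ^ 2)⁻¹ * (2 * c)⁻¹ + c / 2 := by
    have h0 : (1 - r * Real.sin 0 ^ 2) = 1 := by simp
    rw [h0, Real.one_rpow, inv_one, one_mul]
    have : (2*c)⁻¹ + c/2 - 1 = (c - 1)^2 / (2*c) := by field_simp; ring
    nlinarith [div_pos (pow_pos (by linarith : (0:ℝ) < c - 1) 2) (by positivity : (0:ℝ) < 2*c)]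
  have hKlt : K r < ∫ t in (0:ℝ)..(π/2), ((1 - r * Real.sin t ^ 2)⁻¹ * (2 * c)⁻¹ + c / 2) := by
    have : K r = ∫ t in (0:ℝ)..(π/2), (1 - r * Real.sin t ^ 2) ^ (-(1/2) : ℝ) := rfl
    rw [this]
    apply intervalIntegral.integral_lt_integral_of_continuousOn_of_le_of_exists_lt
      (by positivity) hfc.continuousOn hgc.continuousOn (fun x _ => hpt x)
    exact ⟨0, ⟨le_refl 0, by positivity⟩, hstrict0⟩
  have hsplit : ∫ t in (0:ℝ)..(π/2), ((1 - r * Real.sin t ^ 2)⁻¹ * (2 * c)⁻¹ + c / 2)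
      = (∫ t in (0:ℝ)..(π/2), (1 - r * Real.sin t ^ 2)⁻¹) * (2 * c)⁻¹ + (π/2) * (c/2) := by
    have hgi : Continuous fun t : ℝ => (1 - r * Real.sin t ^ 2)⁻¹ :=
      Continuous.inv₀ (by continuity) fun t => (hden t).ne'
    rw [intervalIntegral.integral_add (f := fun t => (1 - r * Real.sin t ^ 2)⁻¹ * (2 * c)⁻¹) ((hgi.mul continuous_const).intervalIntegrable _ _)
      (intervalIntegrable_const), intervalIntegral.integral_mul_const,
      intervalIntegral.integral_const, smul_eq_mul, sub_zero]
  have hval : (∫ t in (0:ℝ)..(π/2), (1 - r * Real.sin t ^ 2)⁻¹) * (2 * c)⁻¹ + (π/2) * (c/2)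
      = (π/2) * c := by
    rw [aux_integral_inv ⟨hr0, hr1⟩]
    have hs : 0 < Real.sqrt (1 - r) := Real.sqrt_pos.2 h1r
    field_simp
    nlinarith [hcs, hs, hc0, hπ]
  have hfinal : (π/2) * c ≤ (π/2) * (1 - r) ^ (-p) := by
    have : c ≤ (1 - r) ^ (-p) :=
      Real.rpow_le_rpow_of_exponent_ge h1r h1r1.le (by linarith : -p ≤ -(1/4))
    nlinarith
  refine ⟨hlow, ?_⟩
  calc K r < _ := hKlt
  _ = (π/2) * c := by rw [hsplit, hval]
  _ ≤ (π/2) * (1 - r) ^ (-p) := hfinal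
end
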